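/- arXiv:0809.4669 — 5 statements merged into one kernel-verified Lean document; each statement's English description precedes it below -/
import Mathlib

section
/- Let φ ∈ ℂ[x₁^{±1},…,x_n^{±1}] be a Laurent polynomial, M := sup{|φ(x)| : |x₁| = ⋯ = |x_n| = 1}, and let t be a real number with 0 < t < 1/M. Then the logarithmic Mahler measure satisfies m(t^{-1} − φ) = log(1/t) − Re( Σ_{m≥1} [φ^m]₀ t^m / m ). -/
open MeasureTheory

/-- Evaluation of a Laurent polynomial `φ ∈ ℂ[x₁^{±1},…,x_n^{±1}]` at the point
`(e^{iθ₁},…,e^{iθ_n})` of the real `n`-torus. -/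
noncomputable def torusEval {n : ℕ} (φ : AddMonoidAlgebra ℂ (Fin n → ℤ)) (θ : Fin n → ℝ) : ℂ :=
  ∑ m ∈ Finsupp.support φ.coeff, φ.coeff m * ∏ j, Complex.exp (θ j * Complex.I) ^ (m j)

noncomputable def torusChar {n : ℕ} (θ : Fin n → ℝ) : Multiplicative (Fin n → ℤ) →* ℂ where
  toFun m := ∏ j, Complex.exp (θ j * Complex.I) ^ (Multiplicative.toAdd m j)
  map_one' := by simp
  map_mul' m m' := by
    rw [← Finset.prod_mul_distrib]
    refine Finset.prod_congr rfl fun j _ => ?_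
    simpa using zpow_add₀ (Complex.exp_ne_zero ((θ j : ℂ) * Complex.I))
      (Multiplicative.toAdd m j) (Multiplicative.toAdd m' j)

lemma torusEval_eq_lift {n : ℕ} (φ : AddMonoidAlgebra ℂ (Fin n → ℤ)) (θ : Fin n → ℝ) :
    torusEval φ θ = AddMonoidAlgebra.lift ℂ ℂ (Fin n → ℤ) (torusChar θ) φ := by
  rw [AddMonoidAlgebra.lift_apply, Finsupp.sum]
  refine Finset.sum_congr rfl fun m _ => ?_
  simp [torusChar, smul_eq_mul]

lemma torusEval_pow {n : ℕ} (φ : AddMonoidAlgebra ℂ (Fin n → ℤ)) (θ : Fin n → ℝ) (k : ℕ) :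
    torusEval (φ ^ k) θ = torusEval φ θ ^ k := by
  simp [torusEval_eq_lift, map_pow]

lemma continuous_torusEval {n : ℕ} (φ : AddMonoidAlgebra ℂ (Fin n → ℤ)) :
    Continuous (torusEval φ) := by
  refine continuous_finset_sum _ fun m _ => continuous_const.mul ?_
  refine continuous_finset_prod _ fun j _ => ?_
  refine Continuous.zpow₀ ?_ _ fun x => Or.inl (Complex.exp_ne_zero _)
  exact Complex.continuous_exp.comp
    (((Complex.continuous_ofReal.comp (continuous_apply j)).mul continuous_const))

lemma torusEval_abs_le {n : ℕ} (φ : AddMonoidAlgebra ℂ (Fin n → ℤ)) (θ : Fin n → ℝ) :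
    ‖torusEval φ θ‖ ≤ ∑ m ∈ Finsupp.support φ.coeff, ‖φ.coeff m‖ := by
  refine (norm_sum_le _ _).trans (Finset.sum_le_sum fun m _ => ?_)
  rw [norm_mul]
  have : ‖∏ j, Complex.exp (θ j * Complex.I) ^ (m j)‖ = 1 := by
    rw [norm_prod]
    refine Finset.prod_eq_one fun j _ => ?_
    rw [norm_zpow, Complex.norm_exp]
    simp
  rw [this, mul_one]

lemma integral_Icc_exp_zpow (a : ℤ) :
    ∫ x in Set.Icc (0:ℝ) (2*Real.pi), Complex.exp (x * Complex.I) ^ a =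
      if a = 0 then ((2*Real.pi : ℝ) : ℂ) else 0 := by
  rcases eq_or_ne a 0 with rfl | ha
  · rw [if_pos rfl]
    simp only [zpow_zero]
    rw [setIntegral_const, Real.volume_real_Icc]
    rw [show (2*Real.pi - 0 : ℝ) = 2*Real.pi by ring,
      max_eq_left Real.two_pi_pos.le]
    simp
  · rw [if_neg ha]
    have h1 : ∀ x : ℝ, Complex.exp (x * Complex.I) ^ a
        = Complex.exp (((a : ℂ) * Complex.I) * x) := by
      intro x
      rw [← Complex.exp_int_mul]
      congr 1
      ring
    simp_rw [h1]
    rw [MeasureTheory.integral_Icc_eq_integral_Ioc,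
      ← intervalIntegral.integral_of_le Real.two_pi_pos.le,
      integral_exp_mul_complex (by simp [ha, Complex.I_ne_zero] : (a : ℂ) * Complex.I ≠ 0)]
    have h2 : (a : ℂ) * Complex.I * ((2*Real.pi : ℝ) : ℂ) = (a : ℂ) * (2*Real.pi*Complex.I) := by
      push_cast; ring
    rw [h2, Complex.exp_int_mul_two_pi_mul_I]
    simp

lemma indicator_pi_prod {n : ℕ} (f : Fin n → ℝ → ℂ) (s : Fin n → Set ℝ) (x : Fin n → ℝ) :
    Set.indicator (Set.pi Set.univ s) (fun y => ∏ j, f j (y j)) x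
      = ∏ j, Set.indicator (s j) (f j) (x j) := by
  by_cases hx : x ∈ Set.pi Set.univ s
  · rw [Set.indicator_of_mem hx]
    exact Finset.prod_congr rfl fun j _ =>
      (Set.indicator_of_mem (hx j (Set.mem_univ j)) _).symm
  · rw [Set.indicator_of_notMem hx]
    simp only [Set.mem_pi, Set.mem_univ, forall_true_left] at hx
    push_neg at hx
    obtain ⟨j, hj⟩ := hx
    exact (Finset.prod_eq_zero (Finset.mem_univ j) (Set.indicator_of_notMem hj _)).symm

lemma setIntegral_pi_prod {n : ℕ} (f : Fin n → ℝ → ℂ) :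
    (∫ θ : Fin n → ℝ in Set.pi Set.univ (fun _ : Fin n => Set.Icc (0:ℝ) (2*Real.pi)),
        ∏ j, f j (θ j))
      = ∏ j, ∫ x in Set.Icc (0:ℝ) (2*Real.pi), f j x := by
  rw [← integral_indicator (MeasurableSet.univ_pi fun _ => measurableSet_Icc)]
  simp_rw [indicator_pi_prod]
  rw [volume_pi, MeasureTheory.integral_fintype_prod_eq_prod
    (fun j => Set.indicator (Set.Icc (0:ℝ) (2*Real.pi)) (f j))]
  exact Finset.prod_congr rfl fun j _ => by rw [integral_indicator measurableSet_Icc]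

lemma isCompact_T (n : ℕ) :
    IsCompact (Set.pi Set.univ (fun _ : Fin n => Set.Icc (0:ℝ) (2*Real.pi))) :=
  isCompact_univ_pi fun _ => isCompact_Icc

lemma integral_torusEval {n : ℕ} (ψ : AddMonoidAlgebra ℂ (Fin n → ℤ)) :
    ∫ θ : Fin n → ℝ in Set.pi Set.univ (fun _ : Fin n => Set.Icc (0:ℝ) (2*Real.pi)),
        torusEval ψ θ
      = (((2*Real.pi)^n : ℝ) : ℂ) * ψ.coeff 0 := by
  have hcont : ∀ m : Fin n → ℤ, Continuous (fun θ : Fin n → ℝ =>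
      ψ.coeff m * ∏ j, Complex.exp (θ j * Complex.I) ^ (m j)) := by
    intro m
    refine continuous_const.mul (continuous_finset_prod _ fun j _ => ?_)
    refine Continuous.zpow₀ ?_ _ fun x => Or.inl (Complex.exp_ne_zero _)
    exact Complex.continuous_exp.comp
      ((Complex.continuous_ofReal.comp (continuous_apply j)).mul continuous_const)
  unfold torusEval
  rw [integral_finset_sum _ (fun m _ =>
    (hcont m).continuousOn.integrableOn_compact (isCompact_T n))]
  have key : ∀ m : Fin n → ℤ,
      (∫ θ : Fin n → ℝ in Set.pi Set.univ (fun _ : Fin n => Set.Icc (0:ℝ) (2*Real.pi)),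
        ψ.coeff m * ∏ j, Complex.exp (θ j * Complex.I) ^ (m j))
      = if m = 0 then ψ.coeff m * (((2*Real.pi)^n : ℝ) : ℂ) else 0 := by
    intro m
    rw [integral_const_mul, setIntegral_pi_prod (fun j x => Complex.exp (x * Complex.I) ^ (m j))]
    simp_rw [integral_Icc_exp_zpow]
    rcases eq_or_ne m 0 with rfl | hm
    · rw [if_pos rfl]
      have h1 : ∀ j : Fin n,
          (if (0 : Fin n → ℤ) j = 0 then ((2*Real.pi:ℝ):ℂ) else 0) = ((2*Real.pi:ℝ):ℂ) :=
        fun j => if_pos rfl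
      rw [Finset.prod_congr rfl fun j _ => h1 j, Finset.prod_const, Finset.card_univ,
        Fintype.card_fin]
      push_cast
      ring
    · rw [if_neg hm]
      obtain ⟨j, hj⟩ := Function.ne_iff.mp hm
      have hj' : (m j : ℤ) ≠ 0 := by simpa using hj
      rw [Finset.prod_eq_zero (Finset.mem_univ j)
        (if_neg hj' : (if m j = 0 then ((2*Real.pi:ℝ):ℂ) else 0) = 0), mul_zero]
  simp_rw [key]
  rw [Finset.sum_ite_eq' (Finsupp.support ψ.coeff) 0 (fun m => ψ.coeff m * (((2*Real.pi)^n : ℝ) : ℂ))]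
  by_cases h0 : (0 : Fin n → ℤ) ∈ Finsupp.support ψ.coeff
  · rw [if_pos h0, mul_comm]
  · rw [if_neg h0, Finsupp.notMem_support_iff.mp h0, mul_zero]

lemma volume_T (n : ℕ) :
    (volume (Set.pi Set.univ (fun _ : Fin n => Set.Icc (0:ℝ) (2*Real.pi)))).toReal
      = (2*Real.pi)^n := by
  rw [volume_pi_pi, Real.volume_Icc, Finset.prod_const, Finset.card_univ, Fintype.card_fin,
    ENNReal.toReal_pow, ENNReal.toReal_ofReal (by rw [sub_zero]; exact Real.two_pi_pos.le)]
  norm_num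

/-- For `0 < t < 1/M` (`M = sup_{torus}|φ|`), the logarithmic Mahler measure
satisfies `m(t⁻¹ − φ) = log(1/t) − Re(Σ_{m≥1} [φ^m]₀ t^m / m)`. -/
theorem mahler_measure_eq (n : ℕ) (φ : AddMonoidAlgebra ℂ (Fin n → ℤ)) (t : ℝ)
    (ht0 : 0 < t) (ht1 : t < 1 / ⨆ θ : Fin n → ℝ, ‖torusEval φ θ‖) :
    (1 / (2 * Real.pi) ^ n) *
        ∫ θ : Fin n → ℝ in Set.pi Set.univ (fun _ : Fin n => Set.Icc (0 : ℝ) (2 * Real.pi)),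
          Real.log (‖(t : ℂ)⁻¹ - torusEval φ θ‖) =
      Real.log (1 / t) -
        (∑' m : ℕ, (φ ^ (m + 1)).coeff 0 * (t : ℂ) ^ (m + 1) / (m + 1)).re := by
  set T := Set.pi Set.univ (fun _ : Fin n => Set.Icc (0 : ℝ) (2 * Real.pi)) with hTdef
  set M := ⨆ θ : Fin n → ℝ, ‖torusEval φ θ‖ with hMdef
  set A := (2 * Real.pi) ^ n with hAdef
  have hA0 : 0 < A := by positivity
  have hTfin : volume T < ⊤ := (isCompact_T n).measure_lt_top
  have hTvol : (volume T).toReal = A := volume_T n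
  -- basic bounds
  have hbdd : BddAbove (Set.range fun θ : Fin n → ℝ => ‖torusEval φ θ‖) :=
    ⟨∑ m ∈ Finsupp.support φ.coeff, ‖φ.coeff m‖, by
      rintro _ ⟨θ, rfl⟩; exact torusEval_abs_le φ θ⟩
  have hMle : ∀ θ : Fin n → ℝ, ‖torusEval φ θ‖ ≤ M := fun θ => le_ciSup hbdd θ
  have hM0 : 0 ≤ M := (norm_nonneg _).trans (hMle 0)
  have hMpos : 0 < M := by
    rcases le_or_gt M 0 with h | h
    · have : M = 0 := le_antisymm h hM0
      rw [this] at ht1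
      norm_num at ht1
      linarith
    · exact h
  have htM : t * M < 1 := (lt_div_iff₀ hMpos).mp ht1
  set z : (Fin n → ℝ) → ℂ := fun θ => (t : ℂ) * torusEval φ θ with hzdef
  have hzc : Continuous z := continuous_const.mul (continuous_torusEval φ)
  have hzle : ∀ θ, ‖z θ‖ ≤ t * M := by
    intro θ
    rw [hzdef, norm_mul, Complex.norm_real, Real.norm_eq_abs, abs_of_pos ht0]
    exact mul_le_mul_of_nonneg_left (hMle θ) ht0.le
  have hzlt : ∀ θ, ‖z θ‖ < 1 := fun θ => (hzle θ).trans_lt htM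
  have hone_sub : ∀ θ, (1 : ℂ) - z θ ≠ 0 := by
    intro θ h
    have hz1 : z θ = 1 := by linear_combination -h
    have h2 := hzlt θ
    rw [hz1] at h2
    simp at h2
  have htne : ((t : ℂ)) ≠ 0 := by exact_mod_cast ht0.ne'
  have hdiff_ne : ∀ θ, (t : ℂ)⁻¹ - torusEval φ θ ≠ 0 := by
    intro θ
    have hfac : (t : ℂ)⁻¹ - torusEval φ θ = (t : ℂ)⁻¹ * (1 - z θ) := by
      field_simp [hzdef]
      rfl
    rw [hfac]
    exact mul_ne_zero (inv_ne_zero htne) (hone_sub θ)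
  -- the series terms
  set F : ℕ → (Fin n → ℝ) → ℝ :=
    fun k θ => ((z θ) ^ (k + 1) / (((k + 1 : ℕ)) : ℂ)).re with hFdef
  have hFc : ∀ k, Continuous (F k) := fun k =>
    Complex.continuous_re.comp ((hzc.pow (k + 1)).div_const _)
  have hFle : ∀ k θ, ‖F k θ‖ ≤ (t * M) ^ (k + 1) := by
    intro k θ
    have h1 : ‖F k θ‖ ≤ ‖(z θ) ^ (k + 1) / (((k + 1 : ℕ)) : ℂ)‖ := by
      rw [Real.norm_eq_abs]
      exact Complex.abs_re_le_norm _
    refine h1.trans ?_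
    rw [norm_div, norm_pow, Complex.norm_natCast]
    have h2 : ‖z θ‖ ^ (k + 1) ≤ (t * M) ^ (k + 1) :=
      pow_le_pow_left₀ (norm_nonneg _) (hzle θ) _
    have h3 : (1:ℝ) ≤ ((k + 1 : ℕ) : ℝ) := by exact_mod_cast Nat.succ_le_succ (Nat.zero_le k)
    calc ‖z θ‖ ^ (k + 1) / ((k + 1 : ℕ) : ℝ)
        ≤ (t * M) ^ (k + 1) / 1 := by gcongr <;> positivity
      _ = (t * M) ^ (k + 1) := div_one _
  -- pointwise series identity
  have hHS : ∀ θ, HasSum (fun k => F k θ) (-Real.log ‖1 - z θ‖) := by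
    intro θ
    have hnorm : ‖z θ‖ < 1 := by exact hzlt θ
    have h := Complex.hasSum_re (Complex.hasSum_taylorSeries_neg_log hnorm)
    have h' : HasSum (fun k : ℕ => ((z θ) ^ k / (k : ℂ)).re)
        (-Real.log ‖1 - z θ‖) := by
      simpa [Complex.log_re] using h
    have h2 := (hasSum_nat_add_iff' (f := fun k : ℕ => ((z θ) ^ k / (k : ℂ)).re) 1).mpr h'
    simpa [hFdef] using h2
  have hlog : ∀ θ, Real.log ‖(t : ℂ)⁻¹ - torusEval φ θ‖
      = Real.log (1 / t) - ∑' k, F k θ := by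
    intro θ
    have hfac : (t : ℂ)⁻¹ - torusEval φ θ = (t : ℂ)⁻¹ * (1 - z θ) := by
      field_simp [hzdef]
      rfl
    rw [hfac, norm_mul, Real.log_mul (by simpa using htne) (norm_ne_zero_iff.mpr (hone_sub θ)),
      (hHS θ).tsum_eq]
    have : ‖(t : ℂ)⁻¹‖ = (1 / t : ℝ) := by
      rw [norm_inv, Complex.norm_real, Real.norm_eq_abs, abs_of_pos ht0, one_div]
    rw [this]
    ring
  -- integrability facts
  have hTmeas : MeasurableSet T := MeasurableSet.univ_pi fun _ => measurableSet_Icc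
  have hH : Continuous (fun θ : Fin n → ℝ =>
      Real.log ‖(t : ℂ)⁻¹ - torusEval φ θ‖) :=
    Continuous.log (continuous_norm.comp (continuous_const.sub (continuous_torusEval φ)))
      (fun θ => norm_ne_zero_iff.mpr (hdiff_ne θ))
  have hHint : IntegrableOn
      (fun θ : Fin n → ℝ => Real.log ‖(t : ℂ)⁻¹ - torusEval φ θ‖) T :=
    hH.continuousOn.integrableOn_compact (isCompact_T n)
  have hGeq : (fun θ : Fin n → ℝ => ∑' k, F k θ)
      = fun θ => Real.log (1 / t) - Real.log ‖(t : ℂ)⁻¹ - torusEval φ θ‖ := by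
    funext θ
    rw [hlog θ]
    ring
  have hGint : IntegrableOn (fun θ : Fin n → ℝ => ∑' k, F k θ) T := by
    rw [hGeq]
    exact (integrableOn_const hTfin.ne).sub hHint
  have hFint : ∀ k, IntegrableOn (F k) T := fun k =>
    (hFc k).continuousOn.integrableOn_compact (isCompact_T n)
  have hFnormint : ∀ k, (∫ θ in T, ‖F k θ‖) ≤ (t * M) ^ (k + 1) * A := by
    intro k
    have h0 : 0 ≤ ∫ θ in T, ‖F k θ‖ := integral_nonneg fun θ => norm_nonneg _
    have hb := norm_setIntegral_le_of_norm_le_const (μ := volume) hTfin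
      (f := fun θ => ‖F k θ‖) (C := (t * M) ^ (k + 1))
      (fun θ _ => by rw [norm_norm]; exact hFle k θ)
    rwa [Real.norm_of_nonneg h0, measureReal_def, hTvol] at hb
  have hgeom : Summable fun k : ℕ => (t * M) ^ (k + 1) * A := by
    have h2 := ((summable_geometric_of_lt_one (mul_nonneg ht0.le hM0) htM).mul_left
      (t * M)).mul_right A
    simpa [pow_succ', mul_assoc] using h2
  have hFsummable : Summable fun k => ∫ θ in T, ‖F k θ‖ :=
    Summable.of_nonneg_of_le (fun k => integral_nonneg fun θ => norm_nonneg _) hFnormint hgeom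
  have hswap : ∑' k, ∫ θ in T, F k θ = ∫ θ in T, ∑' k, F k θ :=
    integral_tsum_of_summable_integral_norm hFint hFsummable
  -- value of each integral
  have hFk : ∀ k : ℕ, (∫ θ in T, F k θ)
      = A * ((φ ^ (k + 1)).coeff 0 * (t : ℂ) ^ (k + 1) / ((k : ℂ) + 1)).re := by
    intro k
    have hg : ∀ θ, (z θ) ^ (k + 1) / (((k + 1 : ℕ)) : ℂ)
        = ((t : ℂ) ^ (k + 1) / (((k + 1 : ℕ)) : ℂ)) * torusEval (φ ^ (k + 1)) θ := by
      intro θ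
      rw [torusEval_pow, hzdef]
      simp only [mul_pow]
      ring
    have hInt : IntegrableOn
        (fun θ => ((t : ℂ) ^ (k + 1) / (((k + 1 : ℕ)) : ℂ)) * torusEval (φ ^ (k + 1)) θ) T :=
      (continuous_const.mul (continuous_torusEval _)).continuousOn.integrableOn_compact
        (isCompact_T n)
    have hFeq : F k = fun θ =>
        (((t : ℂ) ^ (k + 1) / (((k + 1 : ℕ)) : ℂ)) * torusEval (φ ^ (k + 1)) θ).re :=
      funext fun θ => congrArg Complex.re (hg θ)
    rw [hFeq]
    have hre := Complex.reCLM.integral_comp_comm hInt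
    simp only [Complex.reCLM_apply] at hre
    rw [hre, integral_const_mul, integral_torusEval]
    have hc : ((t : ℂ) ^ (k + 1) / (((k + 1 : ℕ)) : ℂ))
        * ((((2 * Real.pi) ^ n : ℝ)) * ((φ ^ (k + 1)).coeff 0))
        = ((A : ℝ) : ℂ) * ((φ ^ (k + 1)).coeff 0 * (t : ℂ) ^ (k + 1) / ((k : ℂ) + 1)) := by
      rw [hAdef]
      push_cast
      ring
    rw [hc, Complex.re_ofReal_mul]
  -- summability of the coefficient series
  have habs_const : ∀ k : ℕ, ‖(φ ^ k).coeff 0‖ ≤ M ^ k := by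
    intro k
    have hb := norm_setIntegral_le_of_norm_le_const (μ := volume) hTfin
      (f := fun θ => torusEval (φ ^ k) θ) (C := M ^ k)
      (fun θ _ => by
        show ‖torusEval (φ ^ k) θ‖ ≤ M ^ k
        rw [torusEval_pow, norm_pow]
        exact pow_le_pow_left₀ (norm_nonneg _) (hMle θ) _)
    rw [integral_torusEval, measureReal_def, hTvol] at hb
    rw [norm_mul, Complex.norm_real, Real.norm_eq_abs, ← hAdef,
      abs_of_pos hA0, mul_comm] at hb
    exact le_of_mul_le_mul_right (by linarith [hb]) hA0
  set c : ℕ → ℂ := fun m => (φ ^ (m + 1)).coeff 0 * (t : ℂ) ^ (m + 1) / ((m : ℂ) + 1) with hcdef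
  have hcle : ∀ m, ‖c m‖ ≤ (t * M) ^ (m + 1) * A := by
    intro m
    have h1 : ‖c m‖ ≤ M ^ (m + 1) * t ^ (m + 1) := by
      rw [hcdef, norm_div, norm_mul, norm_pow, Complex.norm_real, Real.norm_eq_abs,
        abs_of_pos ht0]
      have hden : (1 : ℝ) ≤ ‖(m : ℂ) + 1‖ := by
        have : ((m : ℂ) + 1) = (((m + 1 : ℕ)) : ℂ) := by push_cast; ring
        rw [this, Complex.norm_natCast]
        exact_mod_cast Nat.succ_le_succ (Nat.zero_le m)
      calc ‖(φ ^ (m + 1)).coeff 0‖ * t ^ (m + 1) / ‖(m : ℂ) + 1‖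
          ≤ ‖(φ ^ (m + 1)).coeff 0‖ * t ^ (m + 1) :=
            div_le_self (mul_nonneg (norm_nonneg _) (by positivity)) hden
        _ ≤ M ^ (m + 1) * t ^ (m + 1) := by
            gcongr
            exact habs_const (m + 1)
    refine h1.trans ?_
    have hA1 : (1 : ℝ) ≤ A := by
      rw [hAdef]
      calc (1:ℝ) = 1 ^ n := (one_pow n).symm
        _ ≤ (2 * Real.pi) ^ n :=
          pow_le_pow_left₀ zero_le_one (by nlinarith [Real.pi_gt_three]) n
    calc M ^ (m + 1) * t ^ (m + 1) = (t * M) ^ (m + 1) * 1 := by rw [mul_pow]; ring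
      _ ≤ (t * M) ^ (m + 1) * A := by
          have h0 : (0:ℝ) ≤ (t * M) ^ (m + 1) := by positivity
          nlinarith
  have hcsummable : Summable c :=
    Summable.of_norm (Summable.of_nonneg_of_le (fun m => norm_nonneg _) hcle hgeom)
  -- final assembly
  have hIcalc : (∫ θ in T, Real.log ‖(t : ℂ)⁻¹ - torusEval φ θ‖)
      = A * Real.log (1 / t) - A * ∑' k, (c k).re := by
    rw [show (fun θ : Fin n → ℝ => Real.log ‖(t : ℂ)⁻¹ - torusEval φ θ‖)
        = fun θ => Real.log (1 / t) - ∑' k, F k θ from funext hlog]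
    rw [integral_sub (integrableOn_const (C := Real.log (1 / t)) hTfin.ne) hGint,
      setIntegral_const, measureReal_def, hTvol, smul_eq_mul, ← hswap]
    congr 1
    rw [← tsum_mul_left]
    refine tsum_congr fun k => ?_
    rw [hFk k, hcdef]
  rw [hIcalc, Complex.re_tsum hcsummable]
  field_simp
end

section
/- Let φ(x,y,z) = (x−1)(y−1)(z−1)·[(x−1)(y−1) − xyz] / (xyz) ∈ ℤ[x^{±1}, y^{±1}, z^{±1}]. Then for every integer m ≥ 0, the constant term of φ^m equals Σ_{k=0}^{m} binom(m,k)² · binom(m+k,k)². -/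
open AddMonoidAlgebra Finset

/-- The Laurent monomial `x`. -/
noncomputable def ApX : AddMonoidAlgebra ℚ (Fin 3 → ℤ) := AddMonoidAlgebra.single ![1, 0, 0] 1
/-- The Laurent monomial `y`. -/
noncomputable def ApY : AddMonoidAlgebra ℚ (Fin 3 → ℤ) := AddMonoidAlgebra.single ![0, 1, 0] 1
/-- The Laurent monomial `z`. -/
noncomputable def ApZ : AddMonoidAlgebra ℚ (Fin 3 → ℤ) := AddMonoidAlgebra.single ![0, 0, 1] 1

/-- The Apéry Laurent polynomial `φ = (x−1)(y−1)(z−1)·[(x−1)(y−1) − xyz]/(xyz)`. -/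
noncomputable def phiApery : AddMonoidAlgebra ℚ (Fin 3 → ℤ) :=
  AddMonoidAlgebra.single ![-1, -1, -1] 1 *
    ((ApX - 1) * (ApY - 1) * (ApZ - 1) * ((ApX - 1) * (ApY - 1) - ApX * ApY * ApZ))

abbrev Ap := AddMonoidAlgebra ℚ (Fin 3 → ℤ)

lemma ap_neg_one_eq : (-1 : Ap) = AddMonoidAlgebra.single 0 (-1 : ℚ) := by
  ext a
  rw [AddMonoidAlgebra.coeff_neg, Finsupp.neg_apply]
  simp [AddMonoidAlgebra.coeff_single_apply, AddMonoidAlgebra.one_def]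

lemma ap_neg_one_pow (n : ℕ) : ((-1 : Ap)) ^ n = AddMonoidAlgebra.single 0 ((-1 : ℚ) ^ n) := by
  rw [ap_neg_one_eq, AddMonoidAlgebra.single_pow, smul_zero]

lemma ap_expand_sub_one (v : Fin 3 → ℤ) (p : ℕ) :
    (AddMonoidAlgebra.single v (1:ℚ) - 1) ^ p
      = ∑ t ∈ range (p+1),
          AddMonoidAlgebra.single (t • v) ((-1:ℚ)^(p-t) * (p.choose t : ℚ)) := by
  rw [sub_eq_add_neg, add_pow]
  refine Finset.sum_congr rfl fun t _ => ?_
  have hc : ((p.choose t : ℕ) : Ap) = AddMonoidAlgebra.single 0 ((p.choose t : ℚ)) := rfl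
  rw [AddMonoidAlgebra.single_pow, ap_neg_one_pow, hc,
    AddMonoidAlgebra.single_mul_single, AddMonoidAlgebra.single_mul_single]
  simp

lemma smul_e0 (t : ℕ) : t • (![1,0,0] : Fin 3 → ℤ) = ![(t:ℤ),0,0] := by
  funext i; fin_cases i <;> simp
lemma smul_e1 (t : ℕ) : t • (![0,1,0] : Fin 3 → ℤ) = ![0,(t:ℤ),0] := by
  funext i; fin_cases i <;> simp
lemma smul_e2 (t : ℕ) : t • (![0,0,1] : Fin 3 → ℤ) = ![0,0,(t:ℤ)] := by
  funext i; fin_cases i <;> simp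
lemma vec_add12 (t1 t2 : ℤ) : (![t1,0,0] : Fin 3 → ℤ) + ![0,t2,0] = ![t1,t2,0] := by
  funext i; fin_cases i <;> simp
lemma vec_add123 (t1 t2 t3 : ℤ) : (![t1,t2,0] : Fin 3 → ℤ) + ![0,0,t3] = ![t1,t2,t3] := by
  funext i; fin_cases i <;> simp
lemma vec_eq_iff (t1 t2 t3 a b c : ℤ) :
    (![t1,t2,t3] : Fin 3 → ℤ) = ![a,b,c] ↔ (t1 = a ∧ t2 = b ∧ t3 = c) := by
  constructor
  · intro h; exact ⟨congrFun h 0, congrFun h 1, congrFun h 2⟩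
  · rintro ⟨rfl, rfl, rfl⟩; rfl

/-- coefficient of `T^a` in `(T-1)^p`. -/
def Dcf (p : ℕ) (a : ℤ) : ℚ :=
  ∑ t ∈ range (p+1), if (t:ℤ) = a then (-1:ℚ)^(p-t) * (p.choose t : ℚ) else 0

lemma Dcf_eval (p j : ℕ) (h : j ≤ p) : Dcf p (j : ℤ) = (-1:ℚ)^(p-j) * (p.choose j : ℚ) := by
  unfold Dcf
  rw [Finset.sum_eq_single j]
  · simp
  · intro b _ hbj
    rw [if_neg (by exact_mod_cast hbj)]
  · intro h'
    exact absurd (mem_range.2 (Nat.lt_succ_of_le h)) h'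

lemma ap_sum_apply {ι : Type*} (s : Finset ι) (f : ι → AddMonoidAlgebra ℚ (Fin 3 → ℤ))
    (a : Fin 3 → ℤ) : (∑ i ∈ s, f i).coeff a = ∑ i ∈ s, (f i).coeff a := by
  rw [AddMonoidAlgebra.coeff_sum, Finsupp.finset_sum_apply]

lemma ap_single_apply (w v : Fin 3 → ℤ) (c : ℚ) :
    (AddMonoidAlgebra.single w c).coeff v = if w = v then c else 0 := Finsupp.single_apply

lemma triple_apply (p q r : ℕ) (a b c : ℤ) :
    (((AddMonoidAlgebra.single ![1,0,0] (1:ℚ) - 1) ^ p *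
     (AddMonoidAlgebra.single ![0,1,0] (1:ℚ) - 1) ^ q *
     (AddMonoidAlgebra.single ![0,0,1] (1:ℚ) - 1) ^ r :
       AddMonoidAlgebra ℚ (Fin 3 → ℤ))).coeff ![a,b,c]
    = Dcf p a * Dcf q b * Dcf r c := by
  rw [ap_expand_sub_one, ap_expand_sub_one, ap_expand_sub_one]
  simp only [Finset.sum_mul, Finset.mul_sum, AddMonoidAlgebra.single_mul_single,
    smul_e0, smul_e1, smul_e2, vec_add12, vec_add123]
  unfold Dcf
  simp only [Finset.sum_mul, Finset.mul_sum]
  simp only [ap_sum_apply]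
  simp only [ap_single_apply]
  refine Finset.sum_congr rfl fun t3 _ => Finset.sum_congr rfl fun t2 _ =>
    Finset.sum_congr rfl fun t1 _ => ?_
  simp only [vec_eq_iff]
  split_ifs <;> (try tauto) <;> ring

lemma ap_xyz : AddMonoidAlgebra.single ![1,0,0] (1:ℚ) * AddMonoidAlgebra.single ![0,1,0] 1 *
    AddMonoidAlgebra.single ![0,0,1] 1
    = AddMonoidAlgebra.single (![1,1,1] : Fin 3 → ℤ) (1:ℚ) := by
  rw [AddMonoidAlgebra.single_mul_single, AddMonoidAlgebra.single_mul_single]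
  norm_num

lemma vec_neg (m j : ℕ) (hj : j ≤ m) :
    (-(m • (![-1,-1,-1] : Fin 3 → ℤ)) + (-((m - j) • (![1,1,1] : Fin 3 → ℤ)) + (-0 + 0)))
      = ![(j:ℤ), j, j] := by
  funext i
  fin_cases i <;> simp [Nat.cast_sub hj]

lemma term_eval (m j : ℕ) (hj : j ≤ m) :
    (AddMonoidAlgebra.single (m • (![-1,-1,-1] : Fin 3 → ℤ)) (1:ℚ) *
      (((AddMonoidAlgebra.single ![1,0,0] (1:ℚ) - 1) * (AddMonoidAlgebra.single ![0,1,0] (1:ℚ) - 1) *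
          (AddMonoidAlgebra.single ![0,0,1] (1:ℚ) - 1))^m *
        (((AddMonoidAlgebra.single ![1,0,0] (1:ℚ) - 1) * (AddMonoidAlgebra.single ![0,1,0] (1:ℚ) - 1))^j *
          (-(AddMonoidAlgebra.single ![1,0,0] (1:ℚ) * AddMonoidAlgebra.single ![0,1,0] 1 *
              AddMonoidAlgebra.single ![0,0,1] 1))^(m-j) *
          ((m.choose j : ℕ) : AddMonoidAlgebra ℚ (Fin 3 → ℤ))) :
       AddMonoidAlgebra ℚ (Fin 3 → ℤ))).coeff 0
    = (m.choose j : ℚ)^2 * (((m+j).choose j : ℚ))^2 := by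
  rw [ap_xyz, neg_pow, AddMonoidAlgebra.single_pow, one_pow, ap_neg_one_pow]
  have hc : ((m.choose j : ℕ) : Ap) = AddMonoidAlgebra.single 0 ((m.choose j : ℚ)) := rfl
  rw [hc]
  have h00 : AddMonoidAlgebra.single (0 : Fin 3 → ℤ) ((-1:ℚ)^(m-j) * (m.choose j : ℚ))
      = AddMonoidAlgebra.single 0 ((-1:ℚ)^(m-j)) * AddMonoidAlgebra.single 0 ((m.choose j : ℚ)) := by
    rw [AddMonoidAlgebra.single_mul_single, add_zero]
  have hmain : AddMonoidAlgebra.single (m • (![-1,-1,-1] : Fin 3 → ℤ)) (1:ℚ) *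
      (((AddMonoidAlgebra.single ![1,0,0] (1:ℚ) - 1) * (AddMonoidAlgebra.single ![0,1,0] (1:ℚ) - 1) *
          (AddMonoidAlgebra.single ![0,0,1] (1:ℚ) - 1))^m *
        (((AddMonoidAlgebra.single ![1,0,0] (1:ℚ) - 1) * (AddMonoidAlgebra.single ![0,1,0] (1:ℚ) - 1))^j *
          (AddMonoidAlgebra.single 0 ((-1:ℚ)^(m-j)) *
            AddMonoidAlgebra.single ((m-j) • (![1,1,1] : Fin 3 → ℤ)) 1) *
          AddMonoidAlgebra.single 0 ((m.choose j : ℚ))))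
      = AddMonoidAlgebra.single (0 : Fin 3 → ℤ) ((-1:ℚ)^(m-j) * (m.choose j : ℚ)) *
          (AddMonoidAlgebra.single ((m-j) • (![1,1,1] : Fin 3 → ℤ)) (1:ℚ) *
            (AddMonoidAlgebra.single (m • (![-1,-1,-1] : Fin 3 → ℤ)) (1:ℚ) *
              ((AddMonoidAlgebra.single ![1,0,0] (1:ℚ) - 1)^(m+j) *
               (AddMonoidAlgebra.single ![0,1,0] (1:ℚ) - 1)^(m+j) *
               (AddMonoidAlgebra.single ![0,0,1] (1:ℚ) - 1)^m))) := by
    rw [h00, pow_add, pow_add, mul_pow, mul_pow, mul_pow]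
    ring
  rw [hmain, AddMonoidAlgebra.coeff_single_mul_apply, AddMonoidAlgebra.coeff_single_mul_apply,
    AddMonoidAlgebra.coeff_single_mul_apply, vec_neg m j hj, triple_apply,
    Dcf_eval _ _ (Nat.le_add_left j m), Dcf_eval _ _ hj, Nat.add_sub_cancel]
  have h1 : (-1:ℚ)^(m-j) * (-1:ℚ)^(m-j) = 1 := by
    rw [← pow_add]; exact Even.neg_one_pow ⟨m-j, rfl⟩
  have h2 : (-1:ℚ)^m * (-1:ℚ)^m = 1 := by
    rw [← pow_add]; exact Even.neg_one_pow ⟨m, rfl⟩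
  calc (-1:ℚ)^(m-j) * (m.choose j : ℚ) *
        (1 * (1 * ((-1:ℚ)^m * ((m+j).choose j : ℚ) * ((-1:ℚ)^m * ((m+j).choose j : ℚ)) *
          ((-1:ℚ)^(m-j) * (m.choose j : ℚ)))))
      = ((-1:ℚ)^(m-j) * (-1:ℚ)^(m-j)) * (((-1:ℚ)^m * (-1:ℚ)^m) *
          ((m.choose j : ℚ)^2 * (((m+j).choose j : ℚ))^2)) := by ring
    _ = (m.choose j : ℚ)^2 * (((m+j).choose j : ℚ))^2 := by rw [h1, h2]; ring

/-- The constant term of `φ^m` equals the Apéry number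
`Σ_{k=0}^{m} C(m,k)² C(m+k,k)²`. -/
theorem constantTerm_apery (m : ℕ) :
    (phiApery ^ m).coeff 0 =
      ∑ k ∈ Finset.range (m + 1), ((m.choose k : ℚ)) ^ 2 * (((m + k).choose k : ℚ)) ^ 2 := by
  rw [phiApery]
  simp only [ApX, ApY, ApZ]
  rw [mul_pow, AddMonoidAlgebra.single_pow, one_pow, mul_pow]
  have hH : ((AddMonoidAlgebra.single ![1,0,0] (1:ℚ) - 1) * (AddMonoidAlgebra.single ![0,1,0] (1:ℚ) - 1) -
        AddMonoidAlgebra.single ![1,0,0] (1:ℚ) * AddMonoidAlgebra.single ![0,1,0] 1 *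
          AddMonoidAlgebra.single ![0,0,1] 1 : Ap) ^ m
      = ∑ i ∈ range (m+1),
          ((AddMonoidAlgebra.single ![1,0,0] (1:ℚ) - 1) * (AddMonoidAlgebra.single ![0,1,0] (1:ℚ) - 1)) ^ i *
            (-(AddMonoidAlgebra.single ![1,0,0] (1:ℚ) * AddMonoidAlgebra.single ![0,1,0] 1 *
                AddMonoidAlgebra.single ![0,0,1] 1)) ^ (m - i) * ((m.choose i : ℕ) : Ap) := by
    rw [sub_eq_add_neg, add_pow]
  rw [hH, Finset.mul_sum, Finset.mul_sum, ap_sum_apply]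
  refine Finset.sum_congr rfl fun j hj => ?_
  exact term_eval m j (Nat.lt_succ_iff.mp (mem_range.mp hj))
end

section
/- Let N ≥ 1 and k ≥ 2 be integers and φ : ℤ/Nℤ → ℂ any function. Define the finite Fourier transform φ̂(m) := Σ_{a=0}^{N−1} φ(a) e^{−2πi m a / N} (an N-periodic function of m ∈ ℤ). Then Σ_{a=0}^{N−1} φ(a) B_k(a/N) = ((−1)^{k−1} k! / (2πi)^k) · Σ_{m∈ℤ, m≠0} φ̂(m) / m^k, where the right-hand series converges absolutely. -/
open Complex Real Set

/-- The finite Fourier transform `φ̂(m) = Σ_{a=0}^{N−1} φ(a) e^{−2πi m a/N}`, viewed as an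
`N`-periodic function of `m ∈ ℤ`. -/
noncomputable def finiteFourier (N : ℕ) (φ : ZMod N → ℂ) (m : ℤ) : ℂ :=
  ∑ a ∈ Finset.range N, φ a * Complex.exp (-(2 * Real.pi * Complex.I) * m * a / N)

/-- For `k ≥ 2` and any `φ : ℤ/Nℤ → ℂ`,
`Σ_{a=0}^{N−1} φ(a) B_k(a/N) = ((−1)^{k−1} k!/(2πi)^k) Σ'_{m≠0} φ̂(m)/m^k`, the series on the
right converging absolutely. -/
theorem bernoulli_eval_eq_fourier_L_value (N : ℕ) (hN : 1 ≤ N) (k : ℕ) (hk : 2 ≤ k)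
    (φ : ZMod N → ℂ) :
    Summable (fun m : {m : ℤ // m ≠ 0} => ‖finiteFourier N φ m / (m : ℂ) ^ k‖) ∧
      ∑ a ∈ Finset.range N, φ a * (((Polynomial.bernoulli k).eval ((a : ℚ) / N) : ℚ) : ℂ) =
        ((-1 : ℂ) ^ (k - 1) * (k.factorial : ℂ) / (2 * Real.pi * Complex.I) ^ k) *
          ∑' m : {m : ℤ // m ≠ 0}, finiteFourier N φ m / (m : ℂ) ^ k := by
  have hkne : k ≠ 0 := by omega
  have hNR : (0:ℝ) < N := by positivity
  have hπ : (2 * (π:ℂ) * I) ^ k ≠ 0 := pow_ne_zero _ two_pi_I_ne_zero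
  have hfac : (k.factorial : ℂ) ≠ 0 := Nat.cast_ne_zero.mpr k.factorial_ne_zero
  set c : ℂ := (-1 : ℂ) ^ (k - 1) * (k.factorial : ℂ) / (2 * Real.pi * Complex.I) ^ k with hc
  have hcneg : c * (-1:ℂ)^k = -(k.factorial : ℂ) / (2 * π * I) ^ k := by
    rw [hc]
    have h1 : (-1:ℂ)^(k-1) * (-1:ℂ)^k = -1 := by
      rw [← pow_add]
      have : k - 1 + k = 2*(k-1)+1 := by omega
      rw [this, pow_succ, pow_mul]
      simp
    field_simp
    linear_combination h1
  have hcne : c ≠ 0 := by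
    rw [hc]
    apply div_ne_zero (mul_ne_zero (pow_ne_zero _ (by norm_num)) hfac) hπ
  -- the key HasSum statement over ℤ
  have key : HasSum (fun n : ℤ => c * (finiteFourier N φ n / (n:ℂ)^k))
      (∑ a ∈ Finset.range N, φ a * (((Polynomial.bernoulli k).eval ((a : ℚ) / N) : ℚ) : ℂ)) := by
    have hterms : ∀ a ∈ Finset.range N, HasSum
        (fun n : ℤ => c * (φ a * Complex.exp (-(2 * Real.pi * Complex.I) * n * a / N) / (n:ℂ)^k))
        (φ a * (((Polynomial.bernoulli k).eval ((a : ℚ) / N) : ℚ) : ℂ)) := by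
      intro a ha
      rw [Finset.mem_range] at ha
      have hx : (a:ℝ)/N ∈ Set.Icc (0:ℝ) 1 := by
        constructor
        · positivity
        · rw [div_le_one hNR]; exact_mod_cast ha.le
      have hB := (hasSum_one_div_pow_mul_fourier_mul_bernoulliFun hk hx).mul_left
        (φ a * (-(k.factorial : ℂ) / (2 * π * I) ^ k))
      rw [← (Equiv.neg ℤ).hasSum_iff]
      convert hB using 1
      · rfl
      · funext n
        simp only [Function.comp_apply, Equiv.neg_apply]
        rw [fourier_coe_apply]
        rcases eq_or_ne n 0 with rfl | hn
        · simp [zero_pow hkne]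
        · set E : ℂ := Complex.exp (2 * π * I * n * a / N) with hEdef
          have hE : Complex.exp (-(2 * Real.pi * Complex.I) * (↑(-n):ℂ) * a / N) = E := by
            rw [hEdef]
            congr 1
            push_cast
            ring
          have hF : Complex.exp (2 * π * I * n * (((a:ℝ)/N : ℝ):ℂ) / ((1:ℝ):ℂ)) = E := by
            rw [hEdef]
            congr 1
            push_cast
            ring
          rw [hE, hF]
          push_cast
          rw [neg_pow]
          have hnk : ((n:ℂ))^k ≠ 0 := pow_ne_zero _ (Int.cast_ne_zero.mpr hn)
          have h1 : ((-1:ℂ)^k)⁻¹ = (-1:ℂ)^k := by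
            rw [← inv_pow, inv_neg, inv_one]
          rw [← hcneg, mul_comm ((-1:ℂ)^k) ((n:ℂ)^k), ← div_div,
            div_eq_mul_inv (φ (a : ZMod N) * E / ((n:ℂ)^k)) ((-1:ℂ)^k), h1]
          ring
      · have hbern : ((((Polynomial.bernoulli k).eval ((a : ℚ) / N) : ℚ) : ℝ))
            = bernoulliFun k ((a:ℝ)/N) := by
          rw [bernoulliFun, Polynomial.eval_map]
          have : ((a:ℝ)/N) = algebraMap ℚ ℝ ((a:ℚ)/N) := by push_cast; ring
          rw [this, Polynomial.eval₂_at_apply]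
          simp
        rw [← hbern]
        rw [mul_assoc]
        rw [show (-(k.factorial : ℂ) / (2 * π * I) ^ k) *
          (-(2 * π * I) ^ k / (k.factorial : ℂ) * ((((Polynomial.bernoulli k).eval ((a : ℚ) / N) : ℚ) : ℝ) : ℂ))
          = ((((Polynomial.bernoulli k).eval ((a : ℚ) / N) : ℚ) : ℝ) : ℂ) by
            field_simp]
        push_cast
        ring
    have := hasSum_sum hterms
    refine this.congr_fun fun n => ?_
    simp only [finiteFourier, Finset.mul_sum, Finset.sum_div]
  -- summability of absolute values
  have habs : Summable (fun m : ℤ => ‖finiteFourier N φ m / (m:ℂ)^k‖) := by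
    set C : ℝ := ∑ a ∈ Finset.range N, ‖φ a‖ with hC
    have hCnn : 0 ≤ C := Finset.sum_nonneg fun a _ => (norm_nonneg _)
    have hsummable : Summable (fun m : ℤ => C * |1 / (m:ℝ)^k|) := by
      refine Summable.mul_left _ ?_
      rw [summable_abs_iff]
      exact Real.summable_one_div_int_pow.2 (by omega)
    refine hsummable.of_nonneg_of_le (fun m => norm_nonneg _) fun m => ?_
    rcases eq_or_ne m 0 with rfl | hm
    · simp [zero_pow hkne]
    · have h1 : ‖finiteFourier N φ m‖ ≤ C := by
        rw [hC]
        refine (norm_sum_le _ _).trans ?_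
        refine Finset.sum_le_sum fun a _ => ?_
        rw [norm_mul]
        have : (-(2 * Real.pi * Complex.I) * m * a / N)
            = ((-(2 * Real.pi) * m * a / N : ℝ) : ℂ) * I := by push_cast; ring
        rw [this, Complex.norm_exp_ofReal_mul_I, mul_one]
      rw [norm_div, norm_pow]
      have h2 : ‖(m:ℂ)‖ = |(m:ℝ)| := Complex.norm_intCast m
      rw [h2]
      have h3 : (0:ℝ) < |(m:ℝ)|^k := by
        apply pow_pos
        rw [abs_pos]
        exact_mod_cast hm
      rw [div_le_iff₀ h3]
      calc ‖finiteFourier N φ m‖ ≤ C := h1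
        _ = C * |1/(m:ℝ)^k| * |(m:ℝ)|^k := by
            rw [one_div, abs_inv, _root_.abs_pow, mul_assoc,
              inv_mul_cancel₀ (ne_of_gt h3), mul_one]
  have hsupp : Function.support (fun m : ℤ => finiteFourier N φ m / (m:ℂ)^k) ⊆ {m : ℤ | m ≠ 0} := by
    intro m hm
    simp only [Function.mem_support] at hm
    rcases eq_or_ne m 0 with rfl | h
    · exact absurd (by simp [zero_pow hkne]) hm
    · exact h
  refine ⟨habs.subtype _, ?_⟩
  have hg : HasSum (fun n : ℤ => finiteFourier N φ n / (n:ℂ)^k)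
      (c⁻¹ * ∑ a ∈ Finset.range N, φ a * (((Polynomial.bernoulli k).eval ((a : ℚ) / N) : ℚ) : ℂ)) := by
    have h2 := key.mul_left c⁻¹
    refine h2.congr_fun fun n => ?_
    rw [← mul_assoc, inv_mul_cancel₀ hcne, one_mul]
  have h3 := (hasSum_subtype_iff_of_support_subset hsupp).mpr hg
  have hT : ∑' (m : {m : ℤ // m ≠ 0}), finiteFourier N φ m / (m:ℂ)^k
      = c⁻¹ * ∑ a ∈ Finset.range N, φ a * (((Polynomial.bernoulli k).eval ((a : ℚ) / N) : ℚ) : ℂ) :=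
    h3.tsum_eq
  rw [hT, ← mul_assoc, mul_inv_cancel₀ hcne, one_mul]
end

section
/- As x → 0⁺, one has Σ_{k=2}^{∞} e^{−kx}/(log k)² ∼ 1/(x (log x)²); that is, lim_{x→0⁺} x (log x)² Σ_{k≥2} e^{−kx}/(log k)² = 1. -/
open Real Filter Set

-- L1: x / (1 - exp(-x)) → 1 as x → 0+
lemma lim_x_div_one_sub_exp : Tendsto (fun x : ℝ => x / (1 - Real.exp (-x)))
    (nhdsWithin 0 (Set.Ioi 0)) (nhds 1) := by
  have hslope : Tendsto (fun x : ℝ => (Real.exp x - 1) / x) (nhdsWithin 0 (Set.Ioi 0)) (nhds 1) := by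
    have h := (hasDerivAt_iff_tendsto_slope.1 (Real.hasDerivAt_exp 0))
    simp only [Real.exp_zero] at h
    have h2 := h.mono_left (nhdsWithin_mono _ (fun x hx => ne_of_gt hx : Set.Ioi (0:ℝ) ⊆ {0}ᶜ))
    refine h2.congr (fun x => ?_)
    simp [slope, Real.exp_zero, div_eq_inv_mul]
  have hinv : Tendsto (fun x : ℝ => ((Real.exp x - 1) / x)⁻¹ * Real.exp x)
      (nhdsWithin 0 (Set.Ioi 0)) (nhds 1) := by
    have := (hslope.inv₀ one_ne_zero).mul
      ((Real.continuous_exp.tendsto 0).mono_left nhdsWithin_le_nhds)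
    simpa using this
  refine hinv.congr' ?_
  filter_upwards [self_mem_nhdsWithin] with x (hx : 0 < x)
  have hx0 : x ≠ 0 := ne_of_gt hx
  have hm : 1 - Real.exp (-x) = (Real.exp x - 1) / Real.exp x := by
    rw [Real.exp_neg]; field_simp
  rw [hm]
  have he : Real.exp x ≠ 0 := (Real.exp_pos x).ne'
  have h1 : Real.exp x - 1 ≠ 0 := by
    have : 1 < Real.exp x := by
      rw [show (1:ℝ) = Real.exp 0 by simp]; exact Real.exp_lt_exp.2 hx
    linarith
  field_simp

-- L2: x^δ * (log x)^2 → 0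
lemma lim_rpow_log_sq {δ : ℝ} (hδ : 0 < δ) :
    Tendsto (fun x : ℝ => x ^ δ * Real.log x ^ 2) (nhdsWithin 0 (Set.Ioi 0)) (nhds 0) := by
  have h := tendsto_log_mul_rpow_nhdsGT_zero (show 0 < δ/2 by linarith)
  have h2 := h.mul h
  rw [mul_zero] at h2
  refine h2.congr' ?_
  filter_upwards [self_mem_nhdsWithin] with x (hx : 0 < x)
  rw [show Real.log x * x ^ (δ/2) * (Real.log x * x ^ (δ/2))
      = (x ^ (δ/2) * x ^ (δ/2)) * Real.log x ^ 2 by ring,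
    ← Real.rpow_add hx]
  ring_nf

-- x * (log x)^2 → 0
lemma lim_x_log_sq : Tendsto (fun x : ℝ => x * Real.log x ^ 2)
    (nhdsWithin 0 (Set.Ioi 0)) (nhds 0) := by
  refine (lim_rpow_log_sq one_pos).congr' ?_
  filter_upwards [self_mem_nhdsWithin] with x (hx : 0 < x)
  rw [Real.rpow_one]

-- L3: (log x)^2 / (log (A/x + 1))^2 → 1
lemma lim_log_ratio {A : ℝ} (hA : 1 ≤ A) :
    Tendsto (fun x : ℝ => Real.log x ^ 2 / Real.log (A / x + 1) ^ 2)
      (nhdsWithin 0 (Set.Ioi 0)) (nhds 1) := by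
  have hA0 : 0 < A := lt_of_lt_of_le one_pos hA
  -- g x = log(A+x) * (log x)⁻¹ → 0
  have hlogAx : Tendsto (fun x : ℝ => Real.log (A + x)) (nhdsWithin 0 (Set.Ioi 0))
      (nhds (Real.log A)) := by
    have : ContinuousAt (fun x : ℝ => Real.log (A + x)) 0 := by
      apply (Real.continuousAt_log (by linarith)).comp
      · exact (continuous_const.add continuous_id).continuousAt
    simpa using this.continuousWithinAt.tendsto
  have hinv : Tendsto (fun x : ℝ => (Real.log x)⁻¹) (nhdsWithin 0 (Set.Ioi 0)) (nhds 0) := by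
    have h1 : Tendsto (fun x : ℝ => -Real.log x) (nhdsWithin 0 (Set.Ioi 0)) atTop :=
      tendsto_neg_atBot_atTop.comp Real.tendsto_log_nhdsGT_zero
    have h2 := tendsto_inv_atTop_zero.comp h1
    have h3 := h2.neg
    norm_num at h3
    refine h3.congr (fun x => ?_)
    rfl
  have hg : Tendsto (fun x : ℝ => Real.log (A + x) * (Real.log x)⁻¹)
      (nhdsWithin 0 (Set.Ioi 0)) (nhds 0) := by
    simpa using hlogAx.mul hinv
  have hfin : Tendsto (fun x : ℝ => ((Real.log (A + x) * (Real.log x)⁻¹ - 1) ^ 2)⁻¹)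
      (nhdsWithin 0 (Set.Ioi 0)) (nhds 1) := by
    have h1 : Tendsto (fun x : ℝ => (Real.log (A + x) * (Real.log x)⁻¹ - 1) ^ 2)
        (nhdsWithin 0 (Set.Ioi 0)) (nhds 1) := by
      have := (hg.sub_const 1).pow 2
      norm_num at this
      exact this
    simpa using h1.inv₀ one_ne_zero
  refine hfin.congr' ?_
  filter_upwards [self_mem_nhdsWithin, Ioo_mem_nhdsGT_of_mem (by norm_num : (0:ℝ) ∈ Set.Ico 0 1)]
    with x (hx : 0 < x) hx1
  have hx1 : x < 1 := hx1.2
  have hlogx : Real.log x < 0 := Real.log_neg hx hx1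
  have hAx : 0 < A + x := by linarith
  have hrw : Real.log (A / x + 1) = Real.log (A + x) - Real.log x := by
    rw [show A / x + 1 = (A + x) / x by field_simp, Real.log_div (by linarith) (ne_of_gt hx)]
  rw [hrw]
  have hb : Real.log x ≠ 0 := ne_of_lt hlogx
  rw [show Real.log (A + x) * (Real.log x)⁻¹ - 1
      = (Real.log (A + x) - Real.log x) / Real.log x by field_simp, div_pow, inv_div]


noncomputable def Fterm (x : ℝ) (k : ℕ) : ℝ :=
  Real.exp (-((k : ℝ) + 2) * x) / (Real.log ((k : ℝ) + 2)) ^ 2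

lemma Fterm_exp (x : ℝ) (k : ℕ) :
    Real.exp (-((k : ℝ) + 2) * x) = Real.exp (-x) ^ (k + 2) := by
  rw [← Real.exp_nat_mul]
  congr 1
  push_cast
  ring

lemma log_two_le (k : ℕ) : Real.log 2 ≤ Real.log ((k : ℝ) + 2) := by
  apply Real.log_le_log (by norm_num)
  have : (0:ℝ) ≤ k := Nat.cast_nonneg k
  linarith

lemma log_k2_pos (k : ℕ) : 0 < Real.log ((k : ℝ) + 2) :=
  lt_of_lt_of_le (Real.log_pos (by norm_num)) (log_two_le k)

lemma Fterm_nonneg (x : ℝ) (k : ℕ) : 0 ≤ Fterm x k := by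
  unfold Fterm; positivity

lemma summable_Fterm {x : ℝ} (hx : 0 < x) : Summable (Fterm x) := by
  have ht1 : Real.exp (-x) < 1 := by
    rw [Real.exp_lt_one_iff]; linarith
  have ht0 : 0 ≤ Real.exp (-x) := (Real.exp_pos _).le
  have hg : Summable (fun k : ℕ => (Real.exp (-x) ^ 2 / Real.log 2 ^ 2) * Real.exp (-x) ^ k) :=
    (summable_geometric_of_lt_one ht0 ht1).mul_left _
  refine Summable.of_nonneg_of_le (Fterm_nonneg x) ?_ hg
  intro k
  have h := log_two_le k
  have h2 : (0:ℝ) < Real.log 2 := Real.log_pos one_lt_two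
  unfold Fterm
  rw [Fterm_exp, show (Real.exp (-x) ^ 2 / Real.log 2 ^ 2) * Real.exp (-x) ^ k
      = Real.exp (-x) ^ (k + 2) / Real.log 2 ^ 2 by rw [pow_add]; ring]
  gcongr

lemma tsum_geom_shift {t : ℝ} (ht0 : 0 ≤ t) (ht1 : t < 1) (c : ℕ) :
    ∑' k : ℕ, t ^ (k + c) = t ^ c / (1 - t) := by
  have : ∀ k : ℕ, t ^ (k + c) = t ^ c * t ^ k := fun k => by rw [pow_add]; ring
  simp_rw [this]
  rw [tsum_mul_left, tsum_geometric_of_lt_one ht0 ht1, div_eq_mul_inv]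

lemma sum_geom_range {t : ℝ} (ht1 : t < 1) (n : ℕ) :
    ∑ k ∈ Finset.range n, t ^ (k + 2) = t ^ 2 * (1 - t ^ n) / (1 - t) := by
  have htne : t ≠ 1 := ne_of_lt ht1
  have h1t : (1:ℝ) - t ≠ 0 := by intro h; apply htne; linarith
  have h : ∀ k ∈ Finset.range n, t ^ (k + 2) = t ^ 2 * t ^ k :=
    fun k _ => by rw [pow_add]; ring
  rw [Finset.sum_congr rfl h, ← Finset.mul_sum, geom_sum_eq htne]
  rw [show (t ^ n - 1) / (t - 1) = (1 - t ^ n) / (1 - t) by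
    rw [div_eq_div_iff (sub_ne_zero.2 htne) (sub_ne_zero.2 (Ne.symm htne))]; ring,
    mul_div_assoc]

lemma tsum_lower {A : ℝ} (hA : 1 ≤ A) {x : ℝ} (hx : 0 < x) (hx1 : x < 1) :
    Real.exp (-(2*x)) * (1 - Real.exp (x - A)) /
        ((1 - Real.exp (-x)) * Real.log (A / x + 1) ^ 2) ≤ ∑' k : ℕ, Fterm x k := by
  set t := Real.exp (-x) with htdef
  have ht0 : 0 < t := Real.exp_pos _
  have ht1 : t < 1 := by rw [htdef, Real.exp_lt_one_iff]; linarith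
  have h1t : (0:ℝ) < 1 - t := by linarith
  set K := ⌊A / x⌋₊ with hKdef
  have hAx : 0 < A / x := div_pos (by linarith) hx
  have hlogpos : 0 < Real.log (A / x + 1) := Real.log_pos (by linarith)
  have hsum := summable_Fterm hx
  -- step 1: partial sum lower bounds tsum
  have h1 : ∑ k ∈ Finset.range K, Fterm x k ≤ ∑' k : ℕ, Fterm x k :=
    Summable.sum_le_tsum _ (fun i _ => Fterm_nonneg x i) hsum
  -- step 2: termwise
  have h2 : ∑ k ∈ Finset.range K, t ^ (k + 2) / Real.log (A / x + 1) ^ 2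
      ≤ ∑ k ∈ Finset.range K, Fterm x k := by
    apply Finset.sum_le_sum
    intro k hk
    have hkK : (k : ℝ) + 1 ≤ A / x := by
      have hkK' : k + 1 ≤ K := Finset.mem_range.1 hk
      have := Nat.floor_le hAx.le
      calc ((k:ℝ)) + 1 ≤ (K : ℝ) := by exact_mod_cast hkK'
        _ ≤ A / x := this
    have hlogle : Real.log ((k:ℝ) + 2) ≤ Real.log (A / x + 1) :=
      Real.log_le_log (by positivity) (by linarith)
    unfold Fterm
    rw [Fterm_exp]
    gcongr
    · exact pow_pos (log_k2_pos k) 2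
    · exact (log_k2_pos k).le
  -- step 3: geometric sum value and t^K bound
  have h3 : ∑ k ∈ Finset.range K, t ^ (k + 2) = t ^ 2 * (1 - t ^ K) / (1 - t) :=
    sum_geom_range ht1 K
  have h4 : t ^ K ≤ Real.exp (x - A) := by
    rw [htdef, ← Real.exp_nat_mul, Real.exp_le_exp]
    have hfloor : A / x - 1 < (K : ℝ) := Nat.sub_one_lt_floor _
    have h6 : A / x < (K : ℝ) + 1 := by linarith
    have h7 : A < ((K : ℝ) + 1) * x := (div_lt_iff₀ hx).1 h6
    nlinarith
  -- combine
  have h5 : Real.exp (-(2*x)) * (1 - Real.exp (x - A)) /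
      ((1 - t) * Real.log (A / x + 1) ^ 2)
      ≤ ∑ k ∈ Finset.range K, t ^ (k + 2) / Real.log (A / x + 1) ^ 2 := by
    rw [← Finset.sum_div, h3]
    have ht2 : Real.exp (-(2*x)) = t ^ 2 := by
      rw [htdef, ← Real.exp_nat_mul]; congr 1; ring
    rw [ht2, div_div]
    gcongr
  calc Real.exp (-(2*x)) * (1 - Real.exp (x - A)) /
      ((1 - Real.exp (-x)) * Real.log (A / x + 1) ^ 2)
      ≤ ∑ k ∈ Finset.range K, t ^ (k + 2) / Real.log (A / x + 1) ^ 2 := h5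
    _ ≤ ∑ k ∈ Finset.range K, Fterm x k := h2
    _ ≤ ∑' k : ℕ, Fterm x k := h1

lemma tsum_upper {δ : ℝ} (hδ0 : 0 < δ) (hδ1 : δ < 1) {x : ℝ} (hx : 0 < x) (hx1 : x < 1) :
    ∑' k : ℕ, Fterm x k ≤ (x ^ (δ - 1) + 1) / Real.log 2 ^ 2 +
      1 / ((1 - δ) ^ 2 * Real.log x ^ 2 * (1 - Real.exp (-x))) := by
  set t := Real.exp (-x) with htdef
  have ht0 : 0 < t := Real.exp_pos _
  have ht1 : t < 1 := by rw [htdef, Real.exp_lt_one_iff]; linarith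
  have h1t : (0:ℝ) < 1 - t := by linarith
  have hlog2 : (0:ℝ) < Real.log 2 := Real.log_pos one_lt_two
  have hlogx : Real.log x < 0 := Real.log_neg hx hx1
  have hlogx2 : (0:ℝ) < Real.log x ^ 2 := by nlinarith
  set N := ⌈x ^ (δ - 1)⌉₊ with hNdef
  have hrpow : (0:ℝ) < x ^ (δ - 1) := Real.rpow_pos_of_pos hx _
  have hNge : x ^ (δ - 1) ≤ (N : ℝ) := Nat.le_ceil _
  have hNle : (N : ℝ) ≤ x ^ (δ - 1) + 1 := (Nat.ceil_lt_add_one hrpow.le).le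
  have hsum := summable_Fterm hx
  have hsplit := (Summable.sum_add_tsum_nat_add N hsum).symm
  rw [hsplit]
  have hpart1 : ∑ k ∈ Finset.range N, Fterm x k ≤ (x ^ (δ - 1) + 1) / Real.log 2 ^ 2 := by
    calc ∑ k ∈ Finset.range N, Fterm x k ≤ ∑ _k ∈ Finset.range N, 1 / Real.log 2 ^ 2 := by
          apply Finset.sum_le_sum
          intro k _
          unfold Fterm
          apply div_le_div₀ (by positivity) _ (pow_pos hlog2 2) _
          · exact Real.exp_le_one_iff.2 (by nlinarith [Nat.cast_nonneg (α := ℝ) k])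
          · have := log_two_le k
            have := log_k2_pos k
            nlinarith
      _ = (N : ℝ) / Real.log 2 ^ 2 := by
          rw [Finset.sum_const, Finset.card_range, nsmul_eq_mul]; ring
      _ ≤ (x ^ (δ - 1) + 1) / Real.log 2 ^ 2 := by gcongr
  have hpart2 : ∑' k : ℕ, Fterm x (k + N) ≤
      1 / ((1 - δ) ^ 2 * Real.log x ^ 2 * (1 - t)) := by
    have hbound : ∀ k : ℕ, Fterm x (k + N) ≤
        (1 / ((1 - δ) ^ 2 * Real.log x ^ 2)) * t ^ (k + N + 2) := by
      intro k
      have hcast : ((k + N : ℕ) : ℝ) = (k : ℝ) + (N : ℝ) := by push_cast; ring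
      have hlogge : (1 - δ) * (-Real.log x) ≤ Real.log ((k : ℝ) + (N : ℝ) + 2) := by
        have h1 : x ^ (δ - 1) ≤ (k : ℝ) + (N : ℝ) + 2 := by
          have : (0:ℝ) ≤ (k:ℝ) := Nat.cast_nonneg k
          linarith
        have h2 : Real.log (x ^ (δ - 1)) ≤ Real.log ((k : ℝ) + (N : ℝ) + 2) :=
          Real.log_le_log hrpow h1
        rw [Real.log_rpow hx] at h2
        nlinarith
      have hl2pos : (0:ℝ) < (1 - δ) * (-Real.log x) := by
        apply mul_pos (by linarith) (by linarith)
      have hsq : (1 - δ) ^ 2 * Real.log x ^ 2 ≤ Real.log ((k : ℝ) + (N : ℝ) + 2) ^ 2 := by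
        have := pow_le_pow_left₀ hl2pos.le hlogge 2
        calc (1 - δ) ^ 2 * Real.log x ^ 2 = ((1 - δ) * (-Real.log x)) ^ 2 := by ring
          _ ≤ Real.log ((k : ℝ) + (N : ℝ) + 2) ^ 2 := this
      unfold Fterm
      rw [Fterm_exp, hcast]
      have hexp : Real.exp (-x) ^ (k + N + 2) = t ^ (k + N + 2) := rfl
      rw [hexp, one_div, inv_mul_eq_div]
      apply div_le_div₀ (by positivity) le_rfl (mul_pos (pow_pos (by linarith : (0:ℝ) < 1 - δ) 2) hlogx2) hsq
    have hsumL : Summable (fun k : ℕ => Fterm x (k + N)) := (summable_nat_add_iff N).2 hsum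
    have hsumR : Summable (fun k : ℕ => (1 / ((1 - δ) ^ 2 * Real.log x ^ 2)) * t ^ (k + N + 2)) := by
      have : Summable (fun k : ℕ => t ^ (k + (N + 2))) := by
        have := (summable_geometric_of_lt_one ht0.le ht1).mul_left (t ^ (N + 2))
        refine this.congr (fun k => ?_)
        rw [pow_add]; ring
      have := this.mul_left (1 / ((1 - δ) ^ 2 * Real.log x ^ 2))
      refine this.congr (fun k => ?_)
      rw [show k + (N + 2) = k + N + 2 by ring]
    calc ∑' k : ℕ, Fterm x (k + N)
        ≤ ∑' k : ℕ, (1 / ((1 - δ) ^ 2 * Real.log x ^ 2)) * t ^ (k + N + 2) :=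
          Summable.tsum_le_tsum hbound hsumL hsumR
      _ = (1 / ((1 - δ) ^ 2 * Real.log x ^ 2)) * (t ^ (N + 2) / (1 - t)) := by
          rw [tsum_mul_left]
          congr 1
          rw [show (fun k : ℕ => t ^ (k + N + 2)) = (fun k : ℕ => t ^ (k + (N + 2))) by
            funext k; rw [show k + (N + 2) = k + N + 2 by ring]]
          exact tsum_geom_shift ht0.le ht1 (N + 2)
      _ ≤ (1 / ((1 - δ) ^ 2 * Real.log x ^ 2)) * (1 / (1 - t)) := by
          have htN : t ^ (N + 2) ≤ 1 := pow_le_one₀ ht0.le ht1.le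
          apply mul_le_mul_of_nonneg_left _ (by positivity)
          gcongr
      _ = 1 / ((1 - δ) ^ 2 * Real.log x ^ 2 * (1 - t)) := by
          rw [div_mul_div_comm, one_mul]
  exact add_le_add hpart1 hpart2

noncomputable def LA (A x : ℝ) : ℝ :=
  x * Real.log x ^ 2 * (Real.exp (-(2*x)) * (1 - Real.exp (x - A)) /
    ((1 - Real.exp (-x)) * Real.log (A / x + 1) ^ 2))

noncomputable def UD (δ x : ℝ) : ℝ :=
  (x ^ δ + x) * Real.log x ^ 2 / Real.log 2 ^ 2 +
    x / ((1 - δ) ^ 2 * (1 - Real.exp (-x)))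

lemma lower_tendsto {A : ℝ} (hA : 1 ≤ A) :
    Filter.Tendsto (LA A) (nhdsWithin 0 (Set.Ioi 0)) (nhds (1 - Real.exp (-A))) := by
  have hE2 : Tendsto (fun x : ℝ => Real.exp (-(2*x))) (nhdsWithin 0 (Set.Ioi 0)) (nhds 1) := by
    have h : Tendsto (fun x : ℝ => Real.exp (-(2*x))) (nhds 0) (nhds (Real.exp (-(2*0)))) :=
      Continuous.tendsto (by fun_prop) 0
    have := h.mono_left (nhdsWithin_le_nhds (s := Set.Ioi 0))
    norm_num at this
    exact this
  have hEA : Tendsto (fun x : ℝ => 1 - Real.exp (x - A)) (nhdsWithin 0 (Set.Ioi 0))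
      (nhds (1 - Real.exp (-A))) := by
    have h : Tendsto (fun x : ℝ => 1 - Real.exp (x - A)) (nhds 0)
        (nhds (1 - Real.exp ((0:ℝ) - A))) := Continuous.tendsto (by fun_prop) 0
    have := h.mono_left (nhdsWithin_le_nhds (s := Set.Ioi 0))
    norm_num at this
    exact this
  have hT := ((lim_x_div_one_sub_exp.mul hE2).mul hEA).mul (lim_log_ratio hA)
  norm_num at hT
  refine hT.congr' ?_
  filter_upwards [self_mem_nhdsWithin, Ioo_mem_nhdsGT_of_mem (by norm_num : (0:ℝ) ∈ Set.Ico 0 1)]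
    with x (hx : 0 < x) hx1
  have hx1 : x < 1 := hx1.2
  have ht1 : Real.exp (-x) < 1 := by rw [Real.exp_lt_one_iff]; linarith
  have h1t : (1:ℝ) - Real.exp (-x) ≠ 0 := by linarith [ht1]
  have hAx : 0 < A / x := div_pos (by linarith) hx
  have hlog : Real.log (A / x + 1) ≠ 0 := ne_of_gt (Real.log_pos (by linarith))
  unfold LA
  field_simp

lemma upper_tendsto {δ : ℝ} (hδ0 : 0 < δ) (hδ1 : δ < 1) :
    Filter.Tendsto (UD δ) (nhdsWithin 0 (Set.Ioi 0)) (nhds (((1 - δ) ^ 2)⁻¹)) := by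
  have h1 : Tendsto (fun x : ℝ => (x ^ δ * Real.log x ^ 2 + x * Real.log x ^ 2)
      * (Real.log 2 ^ 2)⁻¹) (nhdsWithin 0 (Set.Ioi 0)) (nhds 0) := by
    have := ((lim_rpow_log_sq hδ0).add lim_x_log_sq).mul_const ((Real.log 2 ^ 2)⁻¹ : ℝ)
    norm_num at this
    exact this
  have h2 : Tendsto (fun x : ℝ => (x / (1 - Real.exp (-x))) * ((1 - δ) ^ 2)⁻¹)
      (nhdsWithin 0 (Set.Ioi 0)) (nhds (((1 - δ) ^ 2)⁻¹)) := by
    have := lim_x_div_one_sub_exp.mul_const (((1 - δ) ^ 2)⁻¹ : ℝ)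
    norm_num at this
    exact this
  have hT := h1.add h2
  norm_num at hT
  refine hT.congr (fun x => ?_)
  unfold UD
  rw [show x / ((1 - δ) ^ 2 * (1 - Real.exp (-x)))
      = x / (1 - Real.exp (-x)) * ((1 - δ) ^ 2)⁻¹ by
    rw [div_eq_mul_inv, mul_inv, div_eq_mul_inv]; ring]
  ring

lemma lower_eventually {A : ℝ} (hA : 1 ≤ A) :
    ∀ᶠ x in nhdsWithin 0 (Set.Ioi 0),
      LA A x ≤ x * Real.log x ^ 2 * ∑' k : ℕ, Fterm x k := by
  filter_upwards [self_mem_nhdsWithin,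
    Ioo_mem_nhdsGT_of_mem (by norm_num : (0:ℝ) ∈ Set.Ico 0 1)] with x (hx : 0 < x) hx1
  have hx1 : x < 1 := hx1.2
  unfold LA
  exact mul_le_mul_of_nonneg_left (tsum_lower hA hx hx1) (by positivity)

lemma upper_eventually {δ : ℝ} (hδ0 : 0 < δ) (hδ1 : δ < 1) :
    ∀ᶠ x in nhdsWithin 0 (Set.Ioi 0),
      x * Real.log x ^ 2 * ∑' k : ℕ, Fterm x k ≤ UD δ x := by
  filter_upwards [self_mem_nhdsWithin,
    Ioo_mem_nhdsGT_of_mem (by norm_num : (0:ℝ) ∈ Set.Ico 0 1)] with x (hx : 0 < x) hx1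
  have hx1 : x < 1 := hx1.2
  have hstep := mul_le_mul_of_nonneg_left (tsum_upper hδ0 hδ1 hx hx1)
    (by positivity : (0:ℝ) ≤ x * Real.log x ^ 2)
  refine hstep.trans (le_of_eq ?_)
  have hlogx : Real.log x < 0 := Real.log_neg hx hx1
  have hlogx2 : Real.log x ≠ 0 := ne_of_lt hlogx
  have ht1 : Real.exp (-x) < 1 := by rw [Real.exp_lt_one_iff]; linarith
  have h1t : (1:ℝ) - Real.exp (-x) ≠ 0 := by linarith [ht1]
  have hδne : (1:ℝ) - δ ≠ 0 := by linarith
  have hlog2 : Real.log 2 ≠ 0 := ne_of_gt (Real.log_pos one_lt_two)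
  have hxx : x ^ δ = x ^ (δ - 1) * x := by
    rw [← Real.rpow_add_one (ne_of_gt hx) (δ - 1)]
    norm_num
  unfold UD
  rw [hxx]
  field_simp

theorem sum_exp_div_log_sq_asymp' :
    Filter.Tendsto
      (fun x : ℝ => x * (Real.log x) ^ 2 * ∑' k : ℕ, Fterm x k)
      (nhdsWithin 0 (Set.Ioi 0)) (nhds 1) := by
  rw [tendsto_order]
  constructor
  · intro a ha
    have hlim : Tendsto (fun A : ℝ => 1 - Real.exp (-A)) atTop (nhds 1) := by
      have h := Real.tendsto_exp_neg_atTop_nhds_zero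
      have := (tendsto_const_nhds (x := (1:ℝ)) (f := atTop)).sub h
      norm_num at this
      exact this
    obtain ⟨A, hA1, hAgt⟩ :=
      ((eventually_ge_atTop (1:ℝ)).and (hlim.eventually (eventually_gt_nhds ha))).exists
    have h1 : ∀ᶠ x in nhdsWithin 0 (Set.Ioi 0), a < LA A x :=
      (lower_tendsto hA1).eventually (eventually_gt_nhds hAgt)
    filter_upwards [h1, lower_eventually hA1] with x hx1 hx2
    exact lt_of_lt_of_le hx1 hx2
  · intro b hb
    set δ : ℝ := min (1/4) ((b - 1)/8) with hδdef
    have hδ0 : 0 < δ := lt_min (by norm_num) (by linarith)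
    have hδ14 : δ ≤ 1/4 := min_le_left _ _
    have hδb : δ ≤ (b - 1)/8 := min_le_right _ _
    have hδ1 : δ < 1 := lt_of_le_of_lt hδ14 (by norm_num)
    have hkey : ((1 - δ) ^ 2)⁻¹ < b := by
      rw [inv_lt_iff_one_lt_mul₀ (by nlinarith)]
      nlinarith [mul_nonneg (by linarith : (0:ℝ) ≤ b - (1 + 8*δ)) (sq_nonneg (1 - δ)),
        mul_pos hδ0 hδ0, mul_nonneg hδ0.le (sq_nonneg δ), hδ0, hδ14]
    have h1 : ∀ᶠ x in nhdsWithin 0 (Set.Ioi 0), UD δ x < b :=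
      (upper_tendsto hδ0 hδ1).eventually (eventually_lt_nhds hkey)
    filter_upwards [h1, upper_eventually hδ0 hδ1] with x hx1 hx2
    exact lt_of_le_of_lt hx2 hx1

/-- As `x → 0⁺`, `Σ_{k≥2} e^{−kx}/(log k)² ∼ 1/(x (log x)²)`. -/
theorem sum_exp_div_log_sq_asymp :
    Filter.Tendsto
      (fun x : ℝ => x * (Real.log x) ^ 2 *
        ∑' k : ℕ, Real.exp (-((k : ℝ) + 2) * x) / (Real.log ((k : ℝ) + 2)) ^ 2)
      (nhdsWithin 0 (Set.Ioi 0)) (nhds 1) := by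
  exact sum_exp_div_log_sq_asymp'
end

section
/- Let (n_k)_{k≥2} be a sequence of real numbers such that: (a) there exists C > 0 with n_k ≥ −C/(log k)² for all sufficiently large k; (b) the limit lim_{k→∞} n_k (log k)² exists in [0, +∞]; and (c) Σ_{k≥2} n_k e^{−kx} ∼ 1/(x (log x)²) as x → 0⁺. Then n_k ∼ 1/(log k)² as k → ∞, i.e. lim_{k→∞} n_k (log k)² = 1. -/
open Filter Real Topology

noncomputable def G (x : ℝ) : ℝ := ∑' k : ℕ, Real.exp (-((k:ℝ)+2)*x)

lemma exp_term (x : ℝ) (k : ℕ) : Real.exp (-((k:ℝ)+2)*x) = Real.exp (-x) ^ (k+2) := by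
  rw [← Real.exp_nat_mul]; congr 1; push_cast; ring

lemma r_lt_one {x : ℝ} (hx : 0 < x) : Real.exp (-x) < 1 :=
  Real.exp_lt_one_iff.mpr (by linarith)

lemma summable_exp {x : ℝ} (hx : 0 < x) : Summable (fun k : ℕ => Real.exp (-((k:ℝ)+2)*x)) := by
  simp only [exp_term]
  have : (fun k : ℕ => Real.exp (-x) ^ (k+2)) = fun k : ℕ => Real.exp (-x) ^ 2 * Real.exp (-x) ^ k := by
    funext k; ring
  rw [this]
  exact (summable_geometric_of_lt_one (Real.exp_nonneg _) (r_lt_one hx)).mul_left _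

lemma G_eq {x : ℝ} (hx : 0 < x) : G x = Real.exp (-x) ^ 2 / (1 - Real.exp (-x)) := by
  unfold G
  simp only [exp_term]
  have : (fun k : ℕ => Real.exp (-x) ^ (k+2)) = fun k : ℕ => Real.exp (-x) ^ 2 * Real.exp (-x) ^ k := by
    funext k; ring
  rw [this, tsum_mul_left, tsum_geometric_of_lt_one (Real.exp_nonneg _) (r_lt_one hx)]
  field_simp

lemma slope_lim : Tendsto (fun x : ℝ => (1 - Real.exp (-x)) / x) (𝓝[>] 0) (𝓝 1) := by
  have h : HasDerivAt (fun x : ℝ => 1 - Real.exp (-x)) 1 0 := by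
    have h1 := (Real.hasDerivAt_exp ((-0:ℝ))).comp 0 (hasDerivAt_neg (0:ℝ))
    have h2 := h1.const_sub 1
    have h3 : ((-0:ℝ) = 0) := by norm_num
    rw [h3] at h2
    norm_num at h2
    convert h2 using 2
  have := hasDerivAt_iff_tendsto_slope.mp h
  have h2 : Tendsto (slope (fun x : ℝ => 1 - Real.exp (-x)) 0) (𝓝[>] 0) (𝓝 1) :=
    this.mono_left (nhdsWithin_mono _ (fun y hy => ne_of_gt hy))
  refine h2.congr' ?_
  filter_upwards [self_mem_nhdsWithin] with y hy
  simp [slope_def_field]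

lemma xG_lim : Tendsto (fun x : ℝ => x * G x) (𝓝[>] 0) (𝓝 1) := by
  have h1 : Tendsto (fun x : ℝ => x / (1 - Real.exp (-x))) (𝓝[>] 0) (𝓝 1) := by
    have := (slope_lim).inv₀ one_ne_zero
    simp only [inv_one] at this
    refine this.congr' ?_
    filter_upwards [self_mem_nhdsWithin] with y _
    rw [inv_div]
  have h2 : Tendsto (fun x : ℝ => Real.exp (-x) ^ 2) (𝓝[>] 0) (𝓝 1) := by
    have : ContinuousAt (fun x : ℝ => Real.exp (-x) ^ 2) 0 := by fun_prop
    have := this.continuousWithinAt (s := Set.Ioi 0) |>.tendsto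
    simpa using this
  have := h2.mul h1
  rw [mul_one] at this
  refine this.congr' ?_
  filter_upwards [self_mem_nhdsWithin] with y hy
  rw [G_eq hy]; ring

noncomputable def Sf (x : ℝ) : ℝ := ∑' k : ℕ, Real.exp (-((k:ℝ)+2)*x) / Real.log ((k:ℝ)+2) ^ 2

lemma log_ge (k : ℕ) : Real.log 2 ≤ Real.log ((k:ℝ)+2) :=
  Real.log_le_log (by norm_num) (by linarith [Nat.cast_nonneg (α := ℝ) k])

lemma log_pos' (k : ℕ) : 0 < Real.log ((k:ℝ)+2) :=
  lt_of_lt_of_le (Real.log_pos (by norm_num)) (log_ge k)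

lemma log_sq_ge (k : ℕ) : Real.log 2 ^ 2 ≤ Real.log ((k:ℝ)+2) ^ 2 := by
  have h2 := Real.log_pos (one_lt_two (α := ℝ))
  have h3 := log_ge k
  nlinarith

lemma summable_S {x : ℝ} (hx : 0 < x) :
    Summable (fun k : ℕ => Real.exp (-((k:ℝ)+2)*x) / Real.log ((k:ℝ)+2) ^ 2) := by
  refine Summable.of_nonneg_of_le (fun k => by positivity) (fun k => ?_)
    ((summable_exp hx).mul_left (1 / Real.log 2 ^ 2))
  have h2 := Real.log_pos (one_lt_two (α := ℝ))
  calc Real.exp (-((k:ℝ)+2)*x) / Real.log ((k:ℝ)+2) ^ 2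
      ≤ Real.exp (-((k:ℝ)+2)*x) / Real.log 2 ^ 2 :=
        div_le_div_of_nonneg_left (Real.exp_nonneg _) (pow_pos (Real.log_pos one_lt_two) 2) (log_sq_ge k)
    _ = 1 / Real.log 2 ^ 2 * Real.exp (-((k:ℝ)+2)*x) := by ring

lemma exp_le_one' {x : ℝ} (hx : 0 < x) (k : ℕ) : Real.exp (-((k:ℝ)+2)*x) ≤ 1 := by
  have h : -((k:ℝ)+2)*x ≤ 0 := by nlinarith [Nat.cast_nonneg (α := ℝ) k]
  calc Real.exp (-((k:ℝ)+2)*x) ≤ Real.exp 0 := Real.exp_le_exp.mpr h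
    _ = 1 := Real.exp_zero

lemma S_upper {ε : ℝ} (hε : 0 < ε) (hε1 : ε < 1) :
    ∀ᶠ x in 𝓝[>] (0:ℝ), x * Real.log x ^ 2 * Sf x ≤
      (x ^ ε * Real.log x ^ 2 + x * Real.log x ^ 2) / Real.log 2 ^ 2
        + (x * G x) / (1-ε)^2 := by
  filter_upwards [Ioo_mem_nhdsGT_of_mem (by norm_num : (0:ℝ) ∈ Set.Ico 0 (1/2))]
    with x hx
  obtain ⟨hx0, hx2⟩ := hx
  have hx1 : x < 1 := by linarith
  have hlogx : Real.log x < 0 := Real.log_neg hx0 hx1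
  have hlogx2 : 0 < Real.log x ^ 2 := pow_two_pos_of_ne_zero (ne_of_lt hlogx)
  set T : ℝ := x ^ (-(1-ε)) with hT
  have hT0 : 0 < T := Real.rpow_pos_of_pos hx0 _
  set M : ℕ := ⌈T⌉₊ with hM
  have hTM : T ≤ (M:ℝ) := Nat.le_ceil T
  have hMT : (M:ℝ) ≤ T + 1 := le_of_lt (Nat.ceil_lt_add_one hT0.le)
  set f : ℕ → ℝ := fun k => Real.exp (-((k:ℝ)+2)*x) / Real.log ((k:ℝ)+2) ^ 2 with hf
  have hsum : Summable f := summable_S hx0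
  have hsplit : Sf x = (∑ k ∈ Finset.range M, f k) + ∑' k, f (k + M) :=
    (Summable.sum_add_tsum_nat_add M hsum).symm
  have hhead : (∑ k ∈ Finset.range M, f k) ≤ (M:ℝ) / Real.log 2 ^ 2 := by
    calc (∑ k ∈ Finset.range M, f k) ≤ ∑ k ∈ Finset.range M, 1 / Real.log 2 ^ 2 := by
          refine Finset.sum_le_sum (fun k _ => ?_)
          calc f k ≤ 1 / Real.log ((k:ℝ)+2) ^ 2 := by
                rw [hf]
                exact (div_le_div_iff_of_pos_right (pow_pos (log_pos' k) 2)).mpr (exp_le_one' hx0 k)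
            _ ≤ 1 / Real.log 2 ^ 2 :=
                one_div_le_one_div_of_le (pow_pos (Real.log_pos one_lt_two) 2) (log_sq_ge k)
      _ = (M:ℝ) / Real.log 2 ^ 2 := by
          rw [Finset.sum_const, Finset.card_range]; ring
  have hdenom : 0 < (1-ε)^2 * Real.log x ^ 2 := mul_pos (pow_pos (by linarith : (0:ℝ) < 1-ε) 2) hlogx2
  have htail : (∑' k, f (k + M)) ≤ G x / ((1-ε)^2 * Real.log x ^ 2) := by
    have hterm : ∀ k : ℕ, f (k + M) ≤ Real.exp (-((k:ℝ)+2)*x) / ((1-ε)^2 * Real.log x ^ 2) := by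
      intro k
      have hge : T ≤ ((k + M : ℕ) : ℝ) + 2 := by
        push_cast; linarith [Nat.cast_nonneg (α := ℝ) k]
      have hlog0 := Real.log_le_log hT0 hge
      rw [hT, Real.log_rpow hx0] at hlog0
      have hlog : (1-ε) * (-Real.log x) ≤ Real.log (((k + M : ℕ):ℝ) + 2) := by linarith
      have h0 : 0 ≤ (1-ε) * (-Real.log x) := by nlinarith
      have hsq : (1-ε)^2 * Real.log x ^ 2 ≤ Real.log (((k + M : ℕ):ℝ) + 2) ^ 2 := by
        nlinarith [log_pos' (k + M)]
      have hnum : Real.exp (-(((k + M : ℕ):ℝ)+2)*x) ≤ Real.exp (-((k:ℝ)+2)*x) := by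
        apply Real.exp_le_exp.mpr; push_cast
        nlinarith [Nat.cast_nonneg (α := ℝ) M]
      calc f (k + M) = Real.exp (-(((k + M:ℕ):ℝ)+2)*x) / Real.log (((k + M:ℕ):ℝ)+2) ^ 2 := rfl
        _ ≤ Real.exp (-((k:ℝ)+2)*x) / ((1-ε)^2 * Real.log x ^ 2) :=
            div_le_div₀ (Real.exp_nonneg _) hnum hdenom hsq
    calc (∑' k, f (k + M)) ≤ ∑' k : ℕ, Real.exp (-((k:ℝ)+2)*x) / ((1-ε)^2 * Real.log x ^ 2) := by
          refine Summable.tsum_le_tsum hterm ((summable_nat_add_iff M).mpr hsum) ?_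
          exact (summable_exp hx0).div_const _
      _ = G x / ((1-ε)^2 * Real.log x ^ 2) := by
          rw [tsum_div_const]; rfl
  have hcomb : Sf x ≤ (M:ℝ) / Real.log 2 ^ 2 + G x / ((1-ε)^2 * Real.log x ^ 2) := by
    rw [hsplit]; exact add_le_add hhead htail
  have hxlog : 0 ≤ x * Real.log x ^ 2 := by positivity
  have step := mul_le_mul_of_nonneg_left hcomb hxlog
  refine le_trans step ?_
  have hxT : x * T = x ^ ε := by
    have h1 : x * T = x ^ (1:ℝ) * x ^ (-(1-ε)) := by rw [Real.rpow_one]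
    rw [h1, ← Real.rpow_add hx0]; congr 1; ring
  have e1 : x * Real.log x ^ 2 * ((M:ℝ) / Real.log 2 ^ 2)
      ≤ (x ^ ε * Real.log x ^ 2 + x * Real.log x ^ 2) / Real.log 2 ^ 2 := by
    have hM' : x * Real.log x ^ 2 * (M:ℝ) ≤ x ^ ε * Real.log x ^ 2 + x * Real.log x ^ 2 := by
      calc x * Real.log x ^ 2 * (M:ℝ) ≤ x * Real.log x ^ 2 * (T + 1) :=
            mul_le_mul_of_nonneg_left hMT hxlog
        _ = (x * T) * Real.log x ^ 2 + x * Real.log x ^ 2 := by ring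
        _ = x ^ ε * Real.log x ^ 2 + x * Real.log x ^ 2 := by rw [hxT]
    calc x * Real.log x ^ 2 * ((M:ℝ) / Real.log 2 ^ 2)
        = (x * Real.log x ^ 2 * (M:ℝ)) / Real.log 2 ^ 2 := by ring
      _ ≤ (x ^ ε * Real.log x ^ 2 + x * Real.log x ^ 2) / Real.log 2 ^ 2 := by gcongr
  have e2 : x * Real.log x ^ 2 * (G x / ((1-ε)^2 * Real.log x ^ 2)) = (x * G x) / (1-ε)^2 := by
    have hc : ((1:ℝ)-ε)^2 ≠ 0 := pow_ne_zero 2 (by linarith)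
    have hL : Real.log x ^ 2 ≠ 0 := ne_of_gt hlogx2
    have hl1 : Real.log x ≠ 0 := ne_of_lt hlogx
    have h1e : (1:ℝ) - ε ≠ 0 := by linarith
    field_simp
  rw [mul_add, e2]
  exact add_le_add e1 (le_refl _)

lemma aux0 {r : ℝ} (hr : 0 < r) :
    Tendsto (fun x : ℝ => x ^ r * Real.log x ^ 2) (𝓝[>] 0) (𝓝 0) := by
  have h := tendsto_log_mul_rpow_nhdsGT_zero (half_pos hr)
  have h2 := h.mul h
  rw [mul_zero] at h2
  refine h2.congr' ?_
  filter_upwards [self_mem_nhdsWithin] with x hx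
  have hxx : x ^ (r/2) * x ^ (r/2) = x ^ r := by
    rw [← Real.rpow_add hx]; congr 1; ring
  rw [← hxx]; ring

lemma aux1 : Tendsto (fun x : ℝ => x * Real.log x ^ 2) (𝓝[>] 0) (𝓝 0) := by
  refine (aux0 one_pos).congr' ?_
  filter_upwards [self_mem_nhdsWithin] with x hx
  rw [Real.rpow_one]

lemma rpow_neg_tendsto {r : ℝ} (hr : 0 < r) :
    Tendsto (fun x : ℝ => x ^ (-r)) (𝓝[>] (0:ℝ)) atTop := by
  have hlog : Tendsto Real.log (𝓝[>] (0:ℝ)) atBot := Real.tendsto_log_nhdsGT_zero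
  have h1 : Tendsto (fun x : ℝ => Real.log x * (-r)) (𝓝[>] (0:ℝ)) atTop :=
    Tendsto.atBot_mul_const_of_neg (by linarith) hlog
  have h2 : Tendsto (fun x : ℝ => Real.exp (Real.log x * (-r))) (𝓝[>] (0:ℝ)) atTop :=
    Real.tendsto_exp_atTop.comp h1
  refine h2.congr' ?_
  filter_upwards [self_mem_nhdsWithin] with x hx
  rw [Real.rpow_def_of_pos hx]

lemma S_lower {ε : ℝ} (hε : 0 < ε) (hε1 : ε < 1) :
    ∀ᶠ x in 𝓝[>] (0:ℝ),
      (x * G x) * (1 - Real.exp (-(⌊x ^ (-(1+ε))⌋₊ : ℝ) * x)) / (1+2*ε)^2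
        ≤ x * Real.log x ^ 2 * Sf x := by
  have hev2 : ∀ᶠ x in 𝓝[>] (0:ℝ), (2:ℝ) ≤ x ^ (-ε) :=
    (rpow_neg_tendsto hε).eventually_ge_atTop 2
  filter_upwards [Ioo_mem_nhdsGT_of_mem (by norm_num : (0:ℝ) ∈ Set.Ico 0 (1/2)), hev2]
    with x hx hx2e
  obtain ⟨hx0, hx2⟩ := hx
  have hx1 : x < 1 := by linarith
  have hlogx : Real.log x < 0 := Real.log_neg hx0 hx1
  have hlogx2 : 0 < Real.log x ^ 2 := pow_two_pos_of_ne_zero (ne_of_lt hlogx)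
  set T : ℝ := x ^ (-(1+ε)) with hT
  have hT0 : 0 < T := Real.rpow_pos_of_pos hx0 _
  have hT1 : 1 ≤ T := Real.one_le_rpow_of_pos_of_le_one_of_nonpos hx0 hx1.le (by linarith)
  set N : ℕ := ⌊T⌋₊ with hN
  have hNT : (N:ℝ) ≤ T := Nat.floor_le hT0.le
  -- key: T + 1 ≤ x ^ (-(1+2ε))
  have hkey : T + 1 ≤ x ^ (-(1+2*ε)) := by
    have h1 : x ^ (-(1+2*ε)) = T * x ^ (-ε) := by
      rw [hT, ← Real.rpow_add hx0]; congr 1; ring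
    rw [h1]
    nlinarith
  set f : ℕ → ℝ := fun k => Real.exp (-((k:ℝ)+2)*x) / Real.log ((k:ℝ)+2) ^ 2 with hf
  set e : ℕ → ℝ := fun k => Real.exp (-((k:ℝ)+2)*x) with he
  have hsumf : Summable f := summable_S hx0
  have hsume : Summable e := summable_exp hx0
  have hdrop : (∑ k ∈ Finset.range N, f k) ≤ Sf x :=
    Summable.sum_le_tsum (Finset.range N) (fun k _ => by positivity) hsumf
  have hdenom : 0 < (1+2*ε)^2 * Real.log x ^ 2 := by positivity
  have hterm : ∀ k ∈ Finset.range N, e k / ((1+2*ε)^2 * Real.log x ^ 2) ≤ f k := by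
    intro k hk
    rw [Finset.mem_range] at hk
    have hk2 : ((k:ℝ)+2) ≤ T + 1 := by
      have : (k:ℝ) + 1 ≤ (N:ℝ) := by exact_mod_cast Nat.succ_le_of_lt hk
      linarith
    have hlogk : Real.log ((k:ℝ)+2) ≤ (1+2*ε) * (-Real.log x) := by
      have h1 := Real.log_le_log (by positivity) (le_trans hk2 hkey)
      rwa [Real.log_rpow hx0, neg_mul, ← mul_neg] at h1
    have hsq : Real.log ((k:ℝ)+2) ^ 2 ≤ (1+2*ε)^2 * Real.log x ^ 2 := by
      nlinarith [log_pos' k]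
    exact div_le_div_of_nonneg_left (Real.exp_nonneg _) (pow_pos (log_pos' k) 2) hsq
  have hgeo : (∑ k ∈ Finset.range N, e k) = G x * (1 - Real.exp (-(N:ℝ)*x)) := by
    have hsplit : G x = (∑ k ∈ Finset.range N, e k) + ∑' k, e (k + N) :=
      (Summable.sum_add_tsum_nat_add N hsume).symm
    have htailv : (∑' k, e (k + N)) = Real.exp (-(N:ℝ)*x) * G x := by
      have : ∀ k : ℕ, e (k + N) = Real.exp (-(N:ℝ)*x) * e k := by
        intro k
        rw [he]; simp only []
        rw [← Real.exp_add]
        congr 1; push_cast; ring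
      rw [tsum_congr this, tsum_mul_left]; rfl
    have hS2 : (∑ k ∈ Finset.range N, e k) = G x - ∑' k, e (k + N) := by linarith
    rw [hS2, htailv]; ring
  have hsum_lower : G x * (1 - Real.exp (-(N:ℝ)*x)) / ((1+2*ε)^2 * Real.log x ^ 2)
      ≤ ∑ k ∈ Finset.range N, f k := by
    calc G x * (1 - Real.exp (-(N:ℝ)*x)) / ((1+2*ε)^2 * Real.log x ^ 2)
        = ∑ k ∈ Finset.range N, e k / ((1+2*ε)^2 * Real.log x ^ 2) := by
          rw [← Finset.sum_div, hgeo]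
      _ ≤ ∑ k ∈ Finset.range N, f k := Finset.sum_le_sum hterm
  have hS : G x * (1 - Real.exp (-(N:ℝ)*x)) / ((1+2*ε)^2 * Real.log x ^ 2) ≤ Sf x :=
    le_trans hsum_lower hdrop
  have hxlog : 0 ≤ x * Real.log x ^ 2 := by positivity
  have step := mul_le_mul_of_nonneg_left hS hxlog
  refine le_trans (le_of_eq ?_) step
  have hc : ((1:ℝ)+2*ε)^2 ≠ 0 := by positivity
  have hL : Real.log x ^ 2 ≠ 0 := ne_of_gt hlogx2
  have hl1 : Real.log x ≠ 0 := ne_of_lt hlogx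
  field_simp

lemma expN_tendsto {ε : ℝ} (hε : 0 < ε) :
    Tendsto (fun x : ℝ => Real.exp (-(⌊x ^ (-(1+ε))⌋₊ : ℝ) * x)) (𝓝[>] (0:ℝ)) (𝓝 0) := by
  have hbd : Tendsto (fun x : ℝ => 1 - x ^ (-ε)) (𝓝[>] (0:ℝ)) atBot := by
    have h1 := tendsto_neg_atTop_atBot.comp (rpow_neg_tendsto hε)
    exact tendsto_atBot_add_const_left _ 1 h1
  have hexp : Tendsto (fun x : ℝ => Real.exp (1 - x ^ (-ε))) (𝓝[>] (0:ℝ)) (𝓝 0) :=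
    Real.tendsto_exp_atBot.comp hbd
  refine tendsto_of_tendsto_of_tendsto_of_le_of_le' tendsto_const_nhds hexp ?_ ?_
  · filter_upwards with x
    exact Real.exp_nonneg _
  · filter_upwards [Ioo_mem_nhdsGT_of_mem (by norm_num : (0:ℝ) ∈ Set.Ico 0 1)] with x hx
    obtain ⟨hx0, hx1⟩ := hx
    set T : ℝ := x ^ (-(1+ε)) with hT
    have hT0 : 0 < T := Real.rpow_pos_of_pos hx0 _
    have hN : T - 1 < (⌊T⌋₊ : ℝ) := Nat.sub_one_lt_floor T
    have hTx : T * x = x ^ (-ε) := by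
      rw [hT]
      have h1 : x ^ (-(1+ε)) * x = x ^ (-(1+ε)) * x ^ (1:ℝ) := by rw [Real.rpow_one]
      rw [h1, ← Real.rpow_add hx0]; congr 1; ring
    apply Real.exp_le_exp.mpr
    nlinarith

lemma kernel_lim : Tendsto (fun x : ℝ => x * Real.log x ^ 2 * Sf x) (𝓝[>] (0:ℝ)) (𝓝 1) := by
  rw [tendsto_order]
  have hev01 : ∀ᶠ ε in 𝓝[>] (0:ℝ), 0 < ε ∧ ε < 1 := by
    filter_upwards [self_mem_nhdsWithin,
      eventually_nhdsWithin_of_eventually_nhds (eventually_lt_nhds one_pos)] with ε h1 h2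
    exact ⟨h1, h2⟩
  constructor
  · intro b hb
    have hcont : Tendsto (fun ε : ℝ => 1/(1+2*ε)^2) (𝓝[>] (0:ℝ)) (𝓝 1) := by
      have hc : ContinuousAt (fun ε : ℝ => 1/(1+2*ε)^2) 0 := by
        apply ContinuousAt.div continuousAt_const (by fun_prop)
        norm_num
      have := hc.continuousWithinAt (s := Set.Ioi (0:ℝ)) |>.tendsto
      simpa using this
    obtain ⟨ε, hεb, hε0, hε1⟩ :
        ∃ ε : ℝ, b < 1/(1+2*ε)^2 ∧ 0 < ε ∧ ε < 1 := by
      have h1 := hcont.eventually (eventually_gt_nhds hb)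
      obtain ⟨ε, h, h0, h2⟩ := (h1.and hev01).exists
      exact ⟨ε, h, h0, h2⟩
    have hl := S_lower hε0 hε1
    have hlim : Tendsto (fun x : ℝ =>
        (x * G x) * (1 - Real.exp (-(⌊x ^ (-(1+ε))⌋₊ : ℝ) * x)) / (1+2*ε)^2)
        (𝓝[>] (0:ℝ)) (𝓝 (1/(1+2*ε)^2)) := by
      have h2 := (xG_lim.mul ((tendsto_const_nhds (x := (1:ℝ))).sub (expN_tendsto hε0))).div_const
        ((1+2*ε)^2)
      simpa using h2
    filter_upwards [hl, hlim.eventually (eventually_gt_nhds hεb)] with x h1 h2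
    exact lt_of_lt_of_le h2 h1
  · intro b hb
    have hcont : Tendsto (fun ε : ℝ => 1/(1-ε)^2) (𝓝[>] (0:ℝ)) (𝓝 1) := by
      have hc : ContinuousAt (fun ε : ℝ => 1/(1-ε)^2) 0 := by
        apply ContinuousAt.div continuousAt_const (by fun_prop)
        norm_num
      have := hc.continuousWithinAt (s := Set.Ioi (0:ℝ)) |>.tendsto
      simpa using this
    obtain ⟨ε, hεb, hε0, hε1⟩ :
        ∃ ε : ℝ, 1/(1-ε)^2 < b ∧ 0 < ε ∧ ε < 1 := by
      have h1 := hcont.eventually (eventually_lt_nhds hb)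
      obtain ⟨ε, h, h0, h2⟩ := (h1.and hev01).exists
      exact ⟨ε, h, h0, h2⟩
    have hu := S_upper hε0 hε1
    have hlim : Tendsto (fun x : ℝ =>
        (x ^ ε * Real.log x ^ 2 + x * Real.log x ^ 2) / Real.log 2 ^ 2
          + (x * G x) / (1-ε)^2) (𝓝[>] (0:ℝ)) (𝓝 (1/(1-ε)^2)) := by
      have hA := ((aux0 hε0).add aux1).div_const (Real.log 2 ^ 2)
      have hB := xG_lim.div_const ((1-ε)^2)
      have := hA.add hB
      norm_num at this
      convert this using 2
      norm_num
    filter_upwards [hu, hlim.eventually (eventually_lt_nhds hεb)] with x h1 h2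
    exact lt_of_le_of_lt h1 h2

lemma lemA (a : ℕ → ℝ) (M : ℝ)
    (hsum : ∀ x : ℝ, 0 < x → Summable (fun k : ℕ => a (k + 2) * Real.exp (-((k : ℝ) + 2) * x)))
    (hc : Tendsto (fun x : ℝ => x * (Real.log x) ^ 2 *
        ∑' k : ℕ, a (k + 2) * Real.exp (-((k : ℝ) + 2) * x))
      (𝓝[>] (0:ℝ)) (𝓝 1))
    (h : ∀ᶠ k : ℕ in atTop, a k ≤ M / (Real.log k) ^ 2) : 1 ≤ M := by
  obtain ⟨K, hK⟩ := eventually_atTop.mp h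
  set d : ℕ → ℝ := fun k => if k < K then a (k+2) - M / Real.log ((k:ℝ)+2)^2 else 0 with hd
  set D : ℝ := ∑ k ∈ Finset.range K, |d k| with hD
  have hbound : ∀ᶠ x in 𝓝[>] (0:ℝ),
      x * Real.log x ^ 2 * ∑' k : ℕ, a (k + 2) * Real.exp (-((k : ℝ) + 2) * x)
        ≤ M * (x * Real.log x ^ 2 * Sf x) + D * (x * Real.log x ^ 2) := by
    filter_upwards [Ioo_mem_nhdsGT_of_mem (by norm_num : (0:ℝ) ∈ Set.Ico 0 1)] with x hx
    obtain ⟨hx0, hx1⟩ := hx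
    set e : ℕ → ℝ := fun k => Real.exp (-((k:ℝ)+2)*x) with he
    set f : ℕ → ℝ := fun k => Real.exp (-((k:ℝ)+2)*x) / Real.log ((k:ℝ)+2) ^ 2 with hf
    have hsumf : Summable f := summable_S hx0
    have hsumd : Summable (fun k => d k * e k) := by
      apply summable_of_ne_finset_zero (s := Finset.range K)
      intro k hk
      rw [Finset.mem_range, not_lt] at hk
      simp [hd, Nat.not_lt.mpr hk]
    have hterm : ∀ k : ℕ, a (k+2) * e k ≤ M * f k + d k * e k := by
      intro k
      by_cases hkK : k < K
      · have : d k = a (k+2) - M / Real.log ((k:ℝ)+2)^2 := by simp [hd, hkK]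
        have hlogk2 : Real.log ((k:ℝ)+2) ^ 2 ≠ 0 := ne_of_gt (pow_pos (log_pos' k) 2)
        have heq : M * f k + d k * e k = a (k+2) * e k := by
          rw [this, hf, he]; field_simp; ring
        exact heq.ge
      · have hdk : d k = 0 := by simp [hd, hkK]
        have hk2 : K ≤ k + 2 := by omega
        have := hK (k+2) hk2
        have hcast : ((k+2 : ℕ) : ℝ) = (k:ℝ) + 2 := by push_cast; ring
        rw [hcast] at this
        have he0 : 0 ≤ e k := Real.exp_nonneg _
        calc a (k+2) * e k ≤ (M / Real.log ((k:ℝ)+2)^2) * e k :=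
              mul_le_mul_of_nonneg_right this he0
          _ = M * f k := by rw [hf, he]; ring
          _ = M * f k + d k * e k := by rw [hdk]; ring
    have hsum_rhs : Summable (fun k => M * f k + d k * e k) :=
      (hsumf.mul_left M).add hsumd
    have htsum : (∑' k : ℕ, a (k + 2) * Real.exp (-((k : ℝ) + 2) * x))
        ≤ M * Sf x + ∑' k, d k * e k := by
      calc (∑' k : ℕ, a (k + 2) * Real.exp (-((k : ℝ) + 2) * x))
          ≤ ∑' k, (M * f k + d k * e k) := Summable.tsum_le_tsum hterm (hsum x hx0) hsum_rhs
        _ = M * Sf x + ∑' k, d k * e k := by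
            rw [Summable.tsum_add (hsumf.mul_left M) hsumd, tsum_mul_left]; rfl
    have hde : (∑' k, d k * e k) ≤ D := by
      rw [tsum_eq_sum (s := Finset.range K) (by
        intro k hk
        rw [Finset.mem_range, not_lt] at hk
        simp [hd, Nat.not_lt.mpr hk])]
      rw [hD]
      refine Finset.sum_le_sum (fun k _ => ?_)
      have he1 : e k ≤ 1 := exp_le_one' hx0 k
      have he0 : 0 ≤ e k := Real.exp_nonneg _
      calc d k * e k ≤ |d k| * e k := mul_le_mul_of_nonneg_right (le_abs_self _) he0
        _ ≤ |d k| * 1 := mul_le_mul_of_nonneg_left he1 (abs_nonneg _)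
        _ = |d k| := mul_one _
    have hxlog : 0 ≤ x * Real.log x ^ 2 := by positivity
    calc x * Real.log x ^ 2 * ∑' k : ℕ, a (k + 2) * Real.exp (-((k : ℝ) + 2) * x)
        ≤ x * Real.log x ^ 2 * (M * Sf x + ∑' k, d k * e k) :=
          mul_le_mul_of_nonneg_left htsum hxlog
      _ ≤ x * Real.log x ^ 2 * (M * Sf x + D) :=
          mul_le_mul_of_nonneg_left (by linarith) hxlog
      _ = M * (x * Real.log x ^ 2 * Sf x) + D * (x * Real.log x ^ 2) := by ring
  have hrhs : Tendsto (fun x : ℝ => M * (x * Real.log x ^ 2 * Sf x) + D * (x * Real.log x ^ 2))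
      (𝓝[>] (0:ℝ)) (𝓝 M) := by
    have := (kernel_lim.const_mul M).add (aux1.const_mul D)
    simpa using this
  exact le_of_tendsto_of_tendsto hc hrhs hbound

lemma lemB (a : ℕ → ℝ) (m : ℝ)
    (hsum : ∀ x : ℝ, 0 < x → Summable (fun k : ℕ => a (k + 2) * Real.exp (-((k : ℝ) + 2) * x)))
    (hc : Tendsto (fun x : ℝ => x * (Real.log x) ^ 2 *
        ∑' k : ℕ, a (k + 2) * Real.exp (-((k : ℝ) + 2) * x))
      (𝓝[>] (0:ℝ)) (𝓝 1))
    (h : ∀ᶠ k : ℕ in atTop, m / (Real.log k) ^ 2 ≤ a k) : m ≤ 1 := by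
  obtain ⟨K, hK⟩ := eventually_atTop.mp h
  set d : ℕ → ℝ := fun k => if k < K then a (k+2) - m / Real.log ((k:ℝ)+2)^2 else 0 with hd
  set D : ℝ := ∑ k ∈ Finset.range K, |d k| with hD
  have hbound : ∀ᶠ x in 𝓝[>] (0:ℝ),
      m * (x * Real.log x ^ 2 * Sf x) - D * (x * Real.log x ^ 2)
        ≤ x * Real.log x ^ 2 * ∑' k : ℕ, a (k + 2) * Real.exp (-((k : ℝ) + 2) * x) := by
    filter_upwards [Ioo_mem_nhdsGT_of_mem (by norm_num : (0:ℝ) ∈ Set.Ico 0 1)] with x hx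
    obtain ⟨hx0, hx1⟩ := hx
    set e : ℕ → ℝ := fun k => Real.exp (-((k:ℝ)+2)*x) with he
    set f : ℕ → ℝ := fun k => Real.exp (-((k:ℝ)+2)*x) / Real.log ((k:ℝ)+2) ^ 2 with hf
    have hsumf : Summable f := summable_S hx0
    have hsumd : Summable (fun k => d k * e k) := by
      apply summable_of_ne_finset_zero (s := Finset.range K)
      intro k hk
      rw [Finset.mem_range, not_lt] at hk
      simp [hd, Nat.not_lt.mpr hk]
    have hterm : ∀ k : ℕ, m * f k + d k * e k ≤ a (k+2) * e k := by
      intro k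
      by_cases hkK : k < K
      · have : d k = a (k+2) - m / Real.log ((k:ℝ)+2)^2 := by simp [hd, hkK]
        have hlogk2 : Real.log ((k:ℝ)+2) ^ 2 ≠ 0 := ne_of_gt (pow_pos (log_pos' k) 2)
        have heq : m * f k + d k * e k = a (k+2) * e k := by
          rw [this, hf, he]; field_simp; ring
        exact heq.le
      · have hdk : d k = 0 := by simp [hd, hkK]
        have hk2 : K ≤ k + 2 := by omega
        have := hK (k+2) hk2
        have hcast : ((k+2 : ℕ) : ℝ) = (k:ℝ) + 2 := by push_cast; ring
        rw [hcast] at this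
        have he0 : 0 ≤ e k := Real.exp_nonneg _
        calc m * f k + d k * e k = (m / Real.log ((k:ℝ)+2)^2) * e k := by
              rw [hdk, hf, he]; ring
          _ ≤ a (k+2) * e k := mul_le_mul_of_nonneg_right this he0
    have hsum_lhs : Summable (fun k => m * f k + d k * e k) :=
      (hsumf.mul_left m).add hsumd
    have htsum : m * Sf x + (∑' k, d k * e k)
        ≤ ∑' k : ℕ, a (k + 2) * Real.exp (-((k : ℝ) + 2) * x) := by
      calc m * Sf x + (∑' k, d k * e k)
          = ∑' k, (m * f k + d k * e k) := by
            rw [Summable.tsum_add (hsumf.mul_left m) hsumd, tsum_mul_left]; rfl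
        _ ≤ ∑' k : ℕ, a (k + 2) * Real.exp (-((k : ℝ) + 2) * x) :=
            Summable.tsum_le_tsum hterm hsum_lhs (hsum x hx0)
    have hde : -D ≤ (∑' k, d k * e k) := by
      rw [tsum_eq_sum (s := Finset.range K) (by
        intro k hk
        rw [Finset.mem_range, not_lt] at hk
        simp [hd, Nat.not_lt.mpr hk])]
      rw [hD]
      have h1 : ∀ k ∈ Finset.range K, -|d k| ≤ d k * e k := by
        intro k _
        have he1 : e k ≤ 1 := exp_le_one' hx0 k
        have he0 : 0 ≤ e k := Real.exp_nonneg _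
        have habs : |d k * e k| ≤ |d k| := by
          rw [abs_mul]
          calc |d k| * |e k| ≤ |d k| * 1 :=
                mul_le_mul_of_nonneg_left (by rw [abs_of_nonneg he0]; exact he1) (abs_nonneg _)
            _ = |d k| := mul_one _
        linarith [neg_abs_le (d k * e k)]
      calc -∑ k ∈ Finset.range K, |d k| = ∑ k ∈ Finset.range K, -|d k| := by
            rw [Finset.sum_neg_distrib]
        _ ≤ ∑ k ∈ Finset.range K, d k * e k := Finset.sum_le_sum h1
    have hxlog : 0 ≤ x * Real.log x ^ 2 := by positivity
    calc m * (x * Real.log x ^ 2 * Sf x) - D * (x * Real.log x ^ 2)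
        = x * Real.log x ^ 2 * (m * Sf x + (-D)) := by ring
      _ ≤ x * Real.log x ^ 2 * (m * Sf x + ∑' k, d k * e k) :=
          mul_le_mul_of_nonneg_left (by linarith) hxlog
      _ ≤ x * Real.log x ^ 2 * ∑' k : ℕ, a (k + 2) * Real.exp (-((k : ℝ) + 2) * x) :=
          mul_le_mul_of_nonneg_left htsum hxlog
  have hlhs : Tendsto (fun x : ℝ => m * (x * Real.log x ^ 2 * Sf x) - D * (x * Real.log x ^ 2))
      (𝓝[>] (0:ℝ)) (𝓝 m) := by
    have := (kernel_lim.const_mul m).sub (aux1.const_mul D)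
    simpa using this
  exact le_of_tendsto_of_tendsto hlhs hc hbound


/-- Laplace Tauberian lemma. If `(n_k)_{k≥2}` satisfies
(a) `n_k ≥ −C/(log k)²` for large `k`, (b) `lim n_k (log k)²` exists in `[0,+∞]`, and
(c) `Σ_{k≥2} n_k e^{−kx} ∼ 1/(x (log x)²)` as `x → 0⁺`, then `n_k ∼ 1/(log k)²`. -/
theorem laplace_tauberian (a : ℕ → ℝ)
    (ha : ∃ C : ℝ, 0 < C ∧ ∀ᶠ k : ℕ in Filter.atTop, -C / (Real.log k) ^ 2 ≤ a k)
    (hb : ∃ L : EReal, 0 ≤ L ∧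
      Filter.Tendsto (fun k : ℕ => ((a k * (Real.log k) ^ 2 : ℝ) : EReal))
        Filter.atTop (nhds L))
    (hsum : ∀ x : ℝ, 0 < x → Summable (fun k : ℕ => a (k + 2) * Real.exp (-((k : ℝ) + 2) * x)))
    (hc : Filter.Tendsto
      (fun x : ℝ => x * (Real.log x) ^ 2 *
        ∑' k : ℕ, a (k + 2) * Real.exp (-((k : ℝ) + 2) * x))
      (nhdsWithin 0 (Set.Ioi 0)) (nhds 1)) :
    Filter.Tendsto (fun k : ℕ => a k * (Real.log k) ^ 2) Filter.atTop (nhds 1) := by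
  clear ha
  obtain ⟨L, hL0, hLtend⟩ := hb
  have hlogk : ∀ᶠ k : ℕ in atTop, 0 < Real.log (k:ℝ) := by
    filter_upwards [eventually_ge_atTop 2] with k hk
    exact Real.log_pos (by exact_mod_cast lt_of_lt_of_le one_lt_two (by exact_mod_cast hk))
  induction L using EReal.rec with
  | bot => simp at hL0
  | top =>
    exfalso
    have h2 : ∀ᶠ k : ℕ in atTop, (2:ℝ) < a k * (Real.log k) ^ 2 := by
      have := EReal.tendsto_nhds_top_iff_real.mp hLtend 2
      filter_upwards [this] with k hk
      exact_mod_cast hk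
    have hB : ∀ᶠ k : ℕ in atTop, (2:ℝ) / (Real.log k) ^ 2 ≤ a k := by
      filter_upwards [h2, hlogk] with k hk hlog
      rw [div_le_iff₀ (by positivity)]
      linarith
    linarith [lemB a 2 hsum hc hB]
  | coe c =>
    have hreal : Tendsto (fun k : ℕ => a k * (Real.log k) ^ 2) atTop (𝓝 c) :=
      EReal.tendsto_coe.mp hLtend
    have hub : ∀ δ : ℝ, 0 < δ → 1 ≤ c + δ := by
      intro δ hδ
      refine lemA a (c + δ) hsum hc ?_
      filter_upwards [hreal.eventually (eventually_lt_nhds (by linarith : c < c + δ)), hlogk]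
        with k hk hlog
      rw [le_div_iff₀ (by positivity)]
      linarith
    have hlb : ∀ δ : ℝ, 0 < δ → c - δ ≤ 1 := by
      intro δ hδ
      have := lemB a (c - δ) hsum hc ?_
      · linarith
      filter_upwards [hreal.eventually (eventually_gt_nhds (by linarith : c - δ < c)), hlogk]
        with k hk hlog
      rw [div_le_iff₀ (by positivity)]
      linarith
    have hc1 : c = 1 := by
      have h1 : 1 ≤ c := le_of_forall_pos_le_add (fun δ hδ => hub δ hδ)
      have h2 : c ≤ 1 := by
        by_contra hcon
        push_neg at hcon
        have := hlb ((c - 1)/2) (by linarith)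
        linarith
      linarith
    rwa [hc1] at hreal
end
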